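/- arXiv:2206.14277 — 2 statements merged into one kernel-verified Lean document; each statement's English description precedes it below -/
import Mathlib

section
/- For every j ∈ ℤ/Nℤ the following hold: [e_j, q_-^1] = (−1)^j·(−q_j^2 + q_{j−1}^2); [e_j, q_-^2] = (−1)^j·(−q_j^3 − q_{j−2}^3 − 4·q_j^1); and for every m with 3 ≤ m ≤ N − 2, [e_j, q_-^m] = (−1)^j·(−q_j^{m+1} − (−1)^m·q_{j−m}^{m+1} − q_j^{m−1} − (−1)^m·q_{j−m+2}^{m−1}). -/
/-- Commutator `[x, y] = x*y - y*x` in a (not necessarily unital) ring. -/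
def cm {A : Type*} [NonUnitalRing A] (x y : A) : A := x * y - y * x

/-- Right-nested iterated commutator `q_i^m = [e_i, [e_{i+1}, ⋯, [e_{i+m-2}, e_{i+m-1}]⋯]]`
(indices mod `N`). -/
def qq {A : Type*} [NonUnitalRing A] {N : ℕ} (e : ZMod N → A) : ℕ → ZMod N → A
  | 0, _ => 0
  | 1, i => e i
  | (m + 2), i => cm (e i) (qq e (m + 1) (i + 1))

/-- `q_+^m = Σ_{i=0}^{N-1} q_i^m`. -/
def qplus {A : Type*} [NonUnitalRing A] {N : ℕ} (e : ZMod N → A) (m : ℕ) : A :=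
  ∑ i ∈ Finset.range N, qq e m (i : ZMod N)

/-- `q_-^m = Σ_{i=0}^{N-1} (-1)^i q_i^m`. -/
def qminus {A : Type*} [NonUnitalRing A] {N : ℕ} (e : ZMod N → A) (m : ℕ) : A :=
  ∑ i ∈ Finset.range N, ((-1 : ℤ) ^ i) • qq e m (i : ZMod N)

/-- `q_e^m = Σ_{i even} q_i^m` (sum over `0 ≤ i < N`). -/
def qev {A : Type*} [NonUnitalRing A] {N : ℕ} (e : ZMod N → A) (m : ℕ) : A :=
  ∑ i ∈ Finset.range N, if Even i then qq e m (i : ZMod N) else 0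

/-- `q_o^m = Σ_{i odd} q_i^m` (sum over `0 ≤ i < N`). -/
def qod {A : Type*} [NonUnitalRing A] {N : ℕ} (e : ZMod N → A) (m : ℕ) : A :=
  ∑ i ∈ Finset.range N, if Odd i then qq e m (i : ZMod N) else 0

section
variable {A : Type*} [NonUnitalRing A]

theorem cm_zero_right (a : A) : cm a 0 = 0 := by simp [cm]
theorem cm_zero_left (a : A) : cm 0 a = 0 := by simp [cm]
theorem cm_add_right (a x y : A) : cm a (x + y) = cm a x + cm a y := by
  simp only [cm, mul_add, add_mul]; abel
theorem cm_sub_right (a x y : A) : cm a (x - y) = cm a x - cm a y := by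
  simp only [cm, mul_sub, sub_mul]; abel
theorem cm_neg_right (a x : A) : cm a (-x) = -cm a x := by
  simp only [cm, mul_neg, neg_mul]; abel
theorem cm_swap (a b : A) : cm a b = -cm b a := by simp [cm]
theorem cm_zsmul_right (a : A) (n : ℤ) (x : A) : cm a (n • x) = n • cm a x := by
  simp [cm, mul_smul_comm, smul_mul_assoc, smul_sub]
theorem cm_zsmul_left (a : A) (n : ℤ) (x : A) : cm (n • x) a = n • cm x a := by
  simp [cm, mul_smul_comm, smul_mul_assoc, smul_sub]
theorem cm_jacobi (a b c : A) : cm a (cm b c) = cm (cm a b) c + cm b (cm a c) := by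
  simp only [cm, mul_sub, sub_mul, mul_assoc]; abel
theorem cm_sum_right {ι : Type*} (a : A) (s : Finset ι) (f : ι → A) :
    cm a (∑ i ∈ s, f i) = ∑ i ∈ s, cm a (f i) := by
  simp [cm, Finset.mul_sum, Finset.sum_mul, ← Finset.sum_sub_distrib]
end


theorem pow_neg_one_mod2 (a b : ℕ) (h : a % 2 = b % 2) : (-1:ℤ)^a = (-1:ℤ)^b := by
  rcases Nat.even_or_odd a with ha | ha
  · have hb : Even b := by rw [Nat.even_iff] at *; omega
    rw [ha.neg_one_pow, hb.neg_one_pow]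
  · have hb : Odd b := by rw [Nat.odd_iff] at ha ⊢; omega
    rw [ha.neg_one_pow, hb.neg_one_pow]

section
variable {N : ℕ}

theorem castne {a b : ℕ} (ha : a < N) (hb : b < N) (h : a ≠ b) : (a : ZMod N) ≠ (b : ZMod N) := by
  intro hc
  have : NeZero N := ⟨by omega⟩
  have := congrArg ZMod.val hc
  rw [ZMod.val_cast_of_lt ha, ZMod.val_cast_of_lt hb] at this
  exact h this

theorem neg_one_eq (hN : 0 < N) : (-1 : ZMod N) = ((N - 1 : ℕ) : ZMod N) := by
  have h : ((N - 1 : ℕ) : ZMod N) + 1 = 0 := by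
    have h2 : ((N - 1 : ℕ) : ZMod N) + ((1:ℕ) : ZMod N) = ((N : ℕ) : ZMod N) := by
      rw [← Nat.cast_add]; congr 1; omega
    simpa [ZMod.natCast_self] using h2
  linear_combination -h

theorem sgn_add (hNe : Even N) (hN : 0 < N) (x y : ZMod N) :
    (-1 : ℤ) ^ (x + y).val = (-1 : ℤ) ^ x.val * (-1 : ℤ) ^ y.val := by
  have : NeZero N := ⟨by omega⟩
  rw [ZMod.val_add x y, ← pow_add]
  apply pow_neg_one_mod2
  have h2 : (2 : ℕ) ∣ N := hNe.two_dvd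
  exact Nat.mod_mod_of_dvd _ h2

theorem sgn_natCast (hNe : Even N) (hN : 0 < N) (t : ℕ) :
    (-1 : ℤ) ^ ((t : ZMod N)).val = (-1 : ℤ) ^ t := by
  have : NeZero N := ⟨by omega⟩
  rw [ZMod.val_natCast N t]
  exact pow_neg_one_mod2 _ _ (Nat.mod_mod_of_dvd _ hNe.two_dvd)

theorem sgn_neg (hNe : Even N) (hN : 0 < N) (x : ZMod N) :
    (-1 : ℤ) ^ ((-x)).val = (-1 : ℤ) ^ x.val := by
  have : NeZero N := ⟨by omega⟩
  have h := sgn_add hNe hN x (-x)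
  rw [add_neg_cancel] at h
  rw [ZMod.val_zero, pow_zero] at h
  rcases Nat.even_or_odd x.val with hx | hx <;> rcases Nat.even_or_odd ((-x)).val with hy | hy
  · rw [hx.neg_one_pow, hy.neg_one_pow]
  · rw [hx.neg_one_pow, hy.neg_one_pow] at h; norm_num at h
  · rw [hx.neg_one_pow, hy.neg_one_pow] at h; norm_num at h
  · rw [hx.neg_one_pow, hy.neg_one_pow]
end
section
variable {A : Type*} [NonUnitalRing A] {N : ℕ} {e : ZMod N → A}


/-- e_i and e_{i+a} commute for 2 ≤ a ≤ N-2. -/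
theorem far (hN : 4 ≤ N)
    (h4 : ∀ i j : ZMod N, j ≠ i - 1 → j ≠ i → j ≠ i + 1 → e i * e j = e j * e i)
    {a : ℕ} (ha : 2 ≤ a) (ha' : a ≤ N - 2) (i : ZMod N) :
    e i * e (i + (a : ZMod N)) = e (i + (a : ZMod N)) * e i := by
  apply h4
  · intro hc
    have : (a : ZMod N) = -1 := by linear_combination hc
    rw [neg_one_eq (by omega)] at this
    exact castne (by omega) (by omega) (by omega) this
  · intro hc
    have : (a : ZMod N) = ((0:ℕ) : ZMod N) := by push_cast; linear_combination hc
    exact castne (by omega) (by omega) (by omega) this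
  · intro hc
    have : (a : ZMod N) = ((1:ℕ) : ZMod N) := by push_cast; linear_combination hc
    exact castne (by omega) (by omega) (by omega) this

theorem cm_far (hN : 4 ≤ N)
    (h4 : ∀ i j : ZMod N, j ≠ i - 1 → j ≠ i → j ≠ i + 1 → e i * e j = e j * e i)
    {a : ℕ} (ha : 2 ≤ a) (ha' : a ≤ N - 2) (i : ZMod N) :
    cm (e i) (e (i + (a : ZMod N))) = 0 := by
  rw [cm, far hN h4 ha ha' i, sub_self]

theorem cm_far' (hN : 4 ≤ N)
    (h4 : ∀ i j : ZMod N, j ≠ i - 1 → j ≠ i → j ≠ i + 1 → e i * e j = e j * e i)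
    {a : ℕ} (ha : 2 ≤ a) (ha' : a ≤ N - 2) (i : ZMod N) :
    cm (e (i + (a : ZMod N))) (e i) = 0 := by
  rw [cm, ← far hN h4 ha ha' i, sub_self]

/-- e_j commutes with q_i^m when it commutes with all generators. -/
theorem cm_qq_zero (j : ZMod N) : ∀ (m : ℕ) (i : ZMod N),
    (∀ t : ℕ, t < m → cm (e j) (e (i + (t : ZMod N))) = 0) → cm (e j) (qq e m i) = 0
  | 0, i, h => by simp [qq, cm]
  | 1, i, h => by
      have := h 0 (by norm_num)
      simpa [qq] using this
  | (m+2), i, h => by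
      rw [show qq e (m+2) i = cm (e i) (qq e (m+1) (i+1)) from rfl, cm_jacobi]
      have h0 : cm (e j) (e i) = 0 := by simpa using h 0 (by omega)
      have hr : cm (e j) (qq e (m+1) (i+1)) = 0 :=
        cm_qq_zero j (m+1) (i+1) (fun t ht => by
          have h' := h (t+1) (by omega)
          rw [show i + ((t+1 : ℕ) : ZMod N) = i + 1 + (t : ZMod N) by push_cast; ring] at h'
          exact h')
      rw [h0, hr, cm_zero_left, cm_zero_right, add_zero]

theorem qq_succ (m : ℕ) (hm : 1 ≤ m) (i : ZMod N) :
    qq e (m+1) i = cm (e i) (qq e m (i+1)) := by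
  obtain ⟨k, rfl⟩ : ∃ k, m = k + 1 := ⟨m - 1, by omega⟩
  rfl

/-- mirror recursion: q_i^{m+1} = [q_i^m, e_{i+m}] for 1 ≤ m ≤ N-2. -/
theorem qq_rev (hN : 4 ≤ N)
    (h4 : ∀ i j : ZMod N, j ≠ i - 1 → j ≠ i → j ≠ i + 1 → e i * e j = e j * e i) :
    ∀ m : ℕ, 1 ≤ m → m ≤ N - 2 → ∀ i : ZMod N,
      qq e (m+1) i = cm (qq e m i) (e (i + (m : ZMod N))) := by
  intro m hm1
  induction m, hm1 using Nat.le_induction with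
  | base =>
      intro _ i
      show cm (e i) (qq e 1 (i+1)) = _
      push_cast
      rfl
  | succ m hm ih =>
      intro hm' i
      rw [qq_succ (m+1) (by omega) i, ih (by omega) (i+1), cm_jacobi]
      have hz : cm (e i) (e (i + 1 + (m : ZMod N))) = 0 := by
        have := cm_far hN h4 (a := m+1) (by omega) (by omega) i
        rw [show i + ((m+1:ℕ) : ZMod N) = i + 1 + (m : ZMod N) by push_cast; ring] at this
        exact this
      rw [hz, cm_zero_right, add_zero, ← qq_succ m hm i,
        show i + 1 + (m : ZMod N) = i + ((m+1:ℕ) : ZMod N) by push_cast; ring]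
end
section
variable {A : Type*} [NonUnitalRing A] {N : ℕ} {e : ZMod N → A}

theorem cm_sub_left {A : Type*} [NonUnitalRing A] (a x y : A) :
    cm (x - y) a = cm x a - cm y a := by
  simp only [cm, mul_sub, sub_mul]; abel

theorem cm_add_left {A : Type*} [NonUnitalRing A] (a x y : A) :
    cm (x + y) a = cm x a + cm y a := by
  simp only [cm, mul_add, add_mul]; abel

theorem cast_nz {c : ℕ} (hc1 : 1 ≤ c) (hc2 : c < N) : (c : ZMod N) ≠ 0 := by
  have : ((0:ℕ) : ZMod N) = 0 := by push_cast; rfl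
  rw [← this]
  exact castne hc2 (by omega) (by omega)

theorem cm_single
    (h4 : ∀ i j : ZMod N, j ≠ i - 1 → j ≠ i → j ≠ i + 1 → e i * e j = e j * e i)
    (x y : ZMod N) (hy1 : y ≠ x - 1) (hy2 : y ≠ x) (hy3 : y ≠ x + 1) :
    cm (e y) (e x) = 0 := by
  rw [cm, ← h4 x y hy1 hy2 hy3, sub_self]

/-- C(0,2) -/
theorem C0_2 (h1 : ∀ i : ZMod N, e i * e i = 0)
    (h2 : ∀ i : ZMod N, e i * e (i + 1) * e i = e i) (j : ZMod N) :
    cm (e j) (qq e 2 j) = (-2 : ℤ) • e j := by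
  show cm (e j) (cm (e j) (e (j+1))) = _
  have hz : e (j+1) * e j * e j = 0 := by rw [mul_assoc, h1, mul_zero]
  simp only [cm, mul_sub, sub_mul, ← mul_assoc]
  rw [h1 j, h2 j, hz]
  simp only [zero_mul, mul_zero]
  abel

/-- C(1,2) -/
theorem C1_2 (h1 : ∀ i : ZMod N, e i * e i = 0)
    (h3 : ∀ i : ZMod N, e (i + 1) * e i * e (i + 1) = e (i + 1)) (j : ZMod N) :
    cm (e j) (qq e 2 (j - 1)) = (2 : ℤ) • e j := by
  show cm (e j) (cm (e (j-1)) (e (j-1+1))) = _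
  rw [show j - 1 + 1 = j by ring]
  have hb : e j * e (j-1) * e j = e j := by
    have := h3 (j-1); rwa [show j - 1 + 1 = j by ring] at this
  have hz : e (j-1) * e j * e j = 0 := by rw [mul_assoc, h1, mul_zero]
  simp only [cm, mul_sub, sub_mul, ← mul_assoc]
  rw [h1 j, hb, hz]
  simp only [zero_mul, mul_zero]
  abel

/-- C(m,m) -/
theorem Cmm (hN : 4 ≤ N)
    (h4 : ∀ i j : ZMod N, j ≠ i - 1 → j ≠ i → j ≠ i + 1 → e i * e j = e j * e i)
    (m : ℕ) (hm : 1 ≤ m) (hm' : m ≤ N - 2) (j : ZMod N) :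
    cm (e j) (qq e m (j - (m : ZMod N))) = -(qq e (m+1) (j - (m : ZMod N))) := by
  have h := qq_rev hN h4 m hm hm' (j - (m : ZMod N))
  rw [show j - (m : ZMod N) + (m : ZMod N) = j by ring] at h
  rw [h, cm_swap]

/-- C(0,m) = 0 for 3 ≤ m ≤ N-2 -/
theorem C0 (hN : 4 ≤ N) (h1 : ∀ i : ZMod N, e i * e i = 0)
    (h2 : ∀ i : ZMod N, e i * e (i + 1) * e i = e i)
    (h4 : ∀ i j : ZMod N, j ≠ i - 1 → j ≠ i → j ≠ i + 1 → e i * e j = e j * e i)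
    (m : ℕ) (hm : 3 ≤ m) (hm' : m ≤ N - 2) (j : ZMod N) :
    cm (e j) (qq e m j) = 0 := by
  induction m, hm using Nat.le_induction with
  | base =>
      rw [qq_rev hN h4 2 (by omega) (by omega) j, cm_jacobi, C0_2 h1 h2 j, cm_zsmul_left,
        cm_far hN h4 (by omega : 2 ≤ 2) (by omega) j, smul_zero, cm_zero_right, add_zero]
  | succ m hm3 ih =>
      rw [qq_rev hN h4 m (by omega) (by omega) j, cm_jacobi, ih (by omega),
        cm_far hN h4 (show 2 ≤ m by omega) (by omega) j, cm_zero_left, cm_zero_right, add_zero]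
end
section
variable {A : Type*} [NonUnitalRing A] {N : ℕ} {e : ZMod N → A}

theorem cm_far_sub (hN : 4 ≤ N)
    (h4 : ∀ i j : ZMod N, j ≠ i - 1 → j ≠ i → j ≠ i + 1 → e i * e j = e j * e i)
    {a : ℕ} (ha : 2 ≤ a) (ha' : a ≤ N - 2) (j : ZMod N) :
    cm (e j) (e (j - (a : ZMod N))) = 0 := by
  have h := cm_far' hN h4 ha ha' (j - (a : ZMod N))
  rwa [sub_add_cancel] at h

/-- C(1,3) = q_j^2 - q_{j-1}^2 -/
theorem C1_3 (hN : 4 ≤ N) (hN5 : 5 ≤ N)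
    (h1 : ∀ i : ZMod N, e i * e i = 0)
    (h2 : ∀ i : ZMod N, e i * e (i + 1) * e i = e i)
    (h3 : ∀ i : ZMod N, e (i + 1) * e i * e (i + 1) = e (i + 1))
    (h4 : ∀ i j : ZMod N, j ≠ i - 1 → j ≠ i → j ≠ i + 1 → e i * e j = e j * e i)
    (j : ZMod N) :
    cm (e j) (qq e 3 (j-1)) = qq e 2 j - qq e 2 (j-1) := by
  have hq3 : qq e 3 (j-1) = cm (e (j-1)) (qq e 2 j) := by
    show cm (e (j-1)) (qq e 2 (j-1+1)) = _
    rw [show j-1+1 = j by ring]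
  have hq2 : qq e 2 (j-1) = cm (e (j-1)) (e j) := by
    show cm (e (j-1)) (e (j-1+1)) = _
    rw [show j-1+1 = j by ring]
  rw [hq3, cm_jacobi, C0_2 h1 h2 j, cm_zsmul_right]
  have key : cm (cm (e j) (e (j-1))) (qq e 2 j) = qq e 2 j + cm (e (j-1)) (e j) := by
    have Lbab : e j * e (j-1) * e j = e j := by
      have := h3 (j-1); rwa [show j - 1 + 1 = j by ring] at this
    have Laba : e (j-1) * e j * e (j-1) = e (j-1) := by
      have := h2 (j-1); rwa [show j - 1 + 1 = j by ring] at this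
    have hbabt : e j * (e (j-1) * e j) = e j := by rw [← mul_assoc, Lbab]
    have hbabx : ∀ x : A, e j * (e (j-1) * (e j * x)) = e j * x := by
      intro x; rw [← mul_assoc, ← mul_assoc, Lbab]
    have hbcbt : e j * (e (j+1) * e j) = e j := by rw [← mul_assoc, h2 j]
    have hbcbx : ∀ x : A, e j * (e (j+1) * (e j * x)) = e j * x := by
      intro x; rw [← mul_assoc, ← mul_assoc, h2 j]
    have hbb : ∀ x : A, e j * (e j * x) = 0 := by
      intro x; rw [← mul_assoc, h1 j, zero_mul]
    have hac : e (j-1) * e (j+1) = e (j+1) * e (j-1) := by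
      have := far hN h4 (a := 2) (by omega) (by omega) (j-1)
      rwa [show j - 1 + ((2:ℕ) : ZMod N) = j + 1 by push_cast; ring] at this
    have hacx : ∀ x : A, e (j-1) * (e (j+1) * x) = e (j+1) * (e (j-1) * x) := by
      intro x; rw [← mul_assoc, hac, mul_assoc]
    show cm (cm (e j) (e (j-1))) (cm (e j) (e (j+1))) = cm (e j) (e (j+1)) + cm (e (j-1)) (e j)
    simp only [cm, mul_sub, sub_mul, mul_assoc]
    simp only [hacx, hbabx, hbcbx, hbb, hbcbt, hbabt, mul_zero, zero_mul]
    abel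
  rw [key, hq2]
  abel

/-- C(1,m) = q_j^{m-1} for 4 ≤ m ≤ N-2, stated with m+1 -/
theorem C1 (hN : 4 ≤ N)
    (h1 : ∀ i : ZMod N, e i * e i = 0)
    (h2 : ∀ i : ZMod N, e i * e (i + 1) * e i = e i)
    (h3 : ∀ i : ZMod N, e (i + 1) * e i * e (i + 1) = e (i + 1))
    (h4 : ∀ i j : ZMod N, j ≠ i - 1 → j ≠ i → j ≠ i + 1 → e i * e j = e j * e i)
    (m : ℕ) (hm : 3 ≤ m) (hm' : m + 1 ≤ N - 2) (j : ZMod N) :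
    cm (e j) (qq e (m+1) (j-1)) = qq e m j := by
  induction m, hm using Nat.le_induction with
  | base =>
      rw [qq_rev hN h4 3 (by omega) (by omega) (j-1)]
      rw [show j - 1 + ((3:ℕ) : ZMod N) = j + ((2:ℕ) : ZMod N) by push_cast; ring]
      rw [cm_jacobi, C1_3 hN (by omega) h1 h2 h3 h4 j, cm_sub_left]
      have hz1 : cm (e j) (e (j + ((2:ℕ) : ZMod N))) = 0 := cm_far hN h4 (by omega) (by omega) j
      have hz2 : cm (qq e 2 (j-1)) (e (j + ((2:ℕ) : ZMod N))) = 0 := by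
        rw [cm_swap, cm_qq_zero (j + ((2:ℕ):ZMod N)) 2 (j-1), neg_zero]
        intro t ht
        interval_cases t
        · rw [show j - 1 + ((0:ℕ):ZMod N) = j - 1 by push_cast; ring]
          have := cm_far' hN h4 (a := 3) (by omega) (by omega) (j - 1)
          rwa [show j - 1 + ((3:ℕ):ZMod N) = j + ((2:ℕ):ZMod N) by push_cast; ring] at this
        · rw [show j - 1 + ((1:ℕ):ZMod N) = j by push_cast; ring]
          have := cm_far' hN h4 (a := 2) (by omega) (by omega) j
          rwa [show j + ((2:ℕ):ZMod N) = j + ((2:ℕ):ZMod N) by ring] at this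
      rw [hz1, hz2, cm_zero_right, add_zero, sub_zero, ← qq_rev hN h4 2 (by omega) (by omega) j]
  | succ m hm3 ih =>
      rw [qq_rev hN h4 (m+1) (by omega) (by omega) (j-1)]
      rw [show j - 1 + ((m+1:ℕ) : ZMod N) = j + ((m:ℕ) : ZMod N) by push_cast; ring]
      rw [cm_jacobi, ih (by omega), cm_far hN h4 (show 2 ≤ m by omega) (by omega) j,
        cm_zero_right, add_zero, ← qq_rev hN h4 m (by omega) (by omega) j]

/-- C(m-1,m) = 0 for 3 ≤ m ≤ N-2, stated with m+1 : cm (e j) (qq e (m+1) (j - m)) = 0 for 2 ≤ m, m+1 ≤ N-2 -/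
theorem Cm1 (hN : 4 ≤ N)
    (h1 : ∀ i : ZMod N, e i * e i = 0)
    (h3 : ∀ i : ZMod N, e (i + 1) * e i * e (i + 1) = e (i + 1))
    (h4 : ∀ i j : ZMod N, j ≠ i - 1 → j ≠ i → j ≠ i + 1 → e i * e j = e j * e i)
    (m : ℕ) (hm : 2 ≤ m) (hm' : m + 1 ≤ N - 2) (j : ZMod N) :
    cm (e j) (qq e (m+1) (j - (m : ZMod N))) = 0 := by
  induction m, hm using Nat.le_induction with
  | base =>
      have hq : qq e 3 (j - ((2:ℕ) : ZMod N)) = cm (e (j - ((2:ℕ):ZMod N))) (qq e 2 (j-1)) := by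
        show cm (e (j - ((2:ℕ):ZMod N))) (qq e 2 (j - ((2:ℕ):ZMod N) + 1)) = _
        rw [show j - ((2:ℕ):ZMod N) + 1 = j - 1 by push_cast; ring]
      rw [hq, cm_jacobi, cm_far_sub hN h4 (a := 2) (by omega) (by omega) j, cm_zero_left,
        C1_2 h1 h3 j, cm_zsmul_right, cm_swap, cm_far_sub hN h4 (a := 2) (by omega) (by omega) j,
        neg_zero, smul_zero, add_zero]
  | succ m hm2 ih =>
      have hq : qq e (m+2) (j - ((m+1:ℕ) : ZMod N))
          = cm (e (j - ((m+1:ℕ):ZMod N))) (qq e (m+1) (j - ((m:ℕ):ZMod N))) := by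
        rw [qq_succ (m+1) (by omega)]
        rw [show j - ((m+1:ℕ):ZMod N) + 1 = j - ((m:ℕ):ZMod N) by push_cast; ring]
      rw [hq, cm_jacobi, cm_far_sub hN h4 (a := m+1) (by omega) (by omega) j, cm_zero_left,
        ih (by omega), cm_zero_right, add_zero]
end
section
variable {A : Type*} [NonUnitalRing A] {N : ℕ} {e : ZMod N → A}

/-- C(m-2,m) = -q_{j-m+2}^{m-1}, stated as : cm (e j) (qq e (m+2) (j-m)) = -(qq e (m+1) (j-m)) -/
theorem Cm2 (hN : 4 ≤ N)
    (h1 : ∀ i : ZMod N, e i * e i = 0)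
    (h2 : ∀ i : ZMod N, e i * e (i + 1) * e i = e i)
    (h3 : ∀ i : ZMod N, e (i + 1) * e i * e (i + 1) = e (i + 1))
    (h4 : ∀ i j : ZMod N, j ≠ i - 1 → j ≠ i → j ≠ i + 1 → e i * e j = e j * e i)
    (m : ℕ) (hm : 2 ≤ m) (hm' : m + 2 ≤ N - 2) (j : ZMod N) :
    cm (e j) (qq e (m+2) (j - (m : ZMod N))) = -(qq e (m+1) (j - (m : ZMod N))) := by
  induction m, hm using Nat.le_induction with
  | base =>
      have hq : qq e 4 (j - ((2:ℕ) : ZMod N)) = cm (e (j - ((2:ℕ):ZMod N))) (qq e 3 (j-1)) := by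
        show cm (e (j - ((2:ℕ):ZMod N))) (qq e 3 (j - ((2:ℕ):ZMod N) + 1)) = _
        rw [show j - ((2:ℕ):ZMod N) + 1 = j - 1 by push_cast; ring]
      rw [hq, cm_jacobi, cm_far_sub hN h4 (a := 2) (by omega) (by omega) j, cm_zero_left,
        C1_3 hN (by omega) h1 h2 h3 h4 j, cm_sub_right]
      have hz : cm (e (j - ((2:ℕ):ZMod N))) (qq e 2 j) = 0 := by
        apply cm_qq_zero
        intro t ht
        interval_cases t
        · rw [show j + ((0:ℕ):ZMod N) = (j - ((2:ℕ):ZMod N)) + ((2:ℕ):ZMod N) by push_cast; ring]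
          exact cm_far hN h4 (by omega) (by omega) _
        · rw [show j + ((1:ℕ):ZMod N) = (j - ((2:ℕ):ZMod N)) + ((3:ℕ):ZMod N) by push_cast; ring]
          exact cm_far hN h4 (by omega) (by omega) _
      have hq3 : qq e 3 (j - ((2:ℕ):ZMod N)) = cm (e (j - ((2:ℕ):ZMod N))) (qq e 2 (j-1)) := by
        show cm (e (j - ((2:ℕ):ZMod N))) (qq e 2 (j - ((2:ℕ):ZMod N) + 1)) = _
        rw [show j - ((2:ℕ):ZMod N) + 1 = j - 1 by push_cast; ring]
      rw [hz, ← hq3, zero_add, zero_sub]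
  | succ m hm2 ih =>
      have hq : qq e (m+3) (j - ((m+1:ℕ) : ZMod N))
          = cm (e (j - ((m+1:ℕ):ZMod N))) (qq e (m+2) (j - ((m:ℕ):ZMod N))) := by
        show cm (e (j - ((m+1:ℕ):ZMod N))) (qq e (m+2) (j - ((m+1:ℕ):ZMod N) + 1)) = _
        rw [show j - ((m+1:ℕ):ZMod N) + 1 = j - ((m:ℕ):ZMod N) by push_cast; ring]
      rw [hq, cm_jacobi, cm_far_sub hN h4 (a := m+1) (by omega) (by omega) j, cm_zero_left,
        ih (by omega), cm_neg_right, zero_add]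
      have hq2 : qq e (m+2) (j - ((m+1:ℕ):ZMod N))
          = cm (e (j - ((m+1:ℕ):ZMod N))) (qq e (m+1) (j - ((m:ℕ):ZMod N))) := by
        rw [qq_succ (m+1) (by omega)]
        rw [show j - ((m+1:ℕ):ZMod N) + 1 = j - ((m:ℕ):ZMod N) by push_cast; ring]
      rw [hq2]

/-- interior vanishing: 2 ≤ k ≤ m-3 -/
theorem Cmid (hN : 4 ≤ N)
    (h1 : ∀ i : ZMod N, e i * e i = 0)
    (h2 : ∀ i : ZMod N, e i * e (i + 1) * e i = e i)
    (h3 : ∀ i : ZMod N, e (i + 1) * e i * e (i + 1) = e (i + 1))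
    (h4 : ∀ i j : ZMod N, j ≠ i - 1 → j ≠ i → j ≠ i + 1 → e i * e j = e j * e i)
    (k : ℕ) (hk : 2 ≤ k) :
    ∀ m : ℕ, k + 3 ≤ m → m ≤ N - 2 → ∀ j : ZMod N,
      cm (e j) (qq e m (j - (k : ZMod N))) = 0 := by
  induction k, hk using Nat.le_induction with
  | base =>
      intro m hm hm' j
      obtain ⟨n, rfl⟩ : ∃ n, m = n + 5 := ⟨m - 5, by omega⟩
      have hq : qq e (n+5) (j - ((2:ℕ) : ZMod N))
          = cm (e (j - ((2:ℕ):ZMod N))) (qq e (n+4) (j-1)) := by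
        show cm (e (j - ((2:ℕ):ZMod N))) (qq e (n+4) (j - ((2:ℕ):ZMod N) + 1)) = _
        rw [show j - ((2:ℕ):ZMod N) + 1 = j - 1 by push_cast; ring]
      rw [hq, cm_jacobi, cm_far_sub hN h4 (a := 2) (by omega) (by omega) j, cm_zero_left,
        zero_add, C1 hN h1 h2 h3 h4 (n+3) (by omega) (by omega) j]
      apply cm_qq_zero
      intro t ht
      rw [show j + ((t:ℕ):ZMod N) = (j - ((2:ℕ):ZMod N)) + ((t+2:ℕ):ZMod N) by push_cast; ring]
      exact cm_far hN h4 (by omega) (by omega) _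
  | succ k hk2 ih =>
      intro m hm hm' j
      obtain ⟨n, rfl⟩ : ∃ n, m = n + 1 := ⟨m - 1, by omega⟩
      have hq : qq e (n+1) (j - ((k+1:ℕ) : ZMod N))
          = cm (e (j - ((k+1:ℕ):ZMod N))) (qq e n (j - ((k:ℕ):ZMod N))) := by
        rw [qq_succ n (by omega)]
        rw [show j - ((k+1:ℕ):ZMod N) + 1 = j - ((k:ℕ):ZMod N) by push_cast; ring]
      rw [hq, cm_jacobi, cm_far_sub hN h4 (a := k+1) (by omega) (by omega) j, cm_zero_left,
        ih n (by omega) (by omega) j, cm_zero_right, add_zero]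
end
section
variable {A : Type*} [NonUnitalRing A] {N : ℕ} {e : ZMod N → A}

theorem main_sum (hN : 4 ≤ N) (hNe : Even N)
    (h4 : ∀ i j : ZMod N, j ≠ i - 1 → j ≠ i → j ≠ i + 1 → e i * e j = e j * e i)
    (m : ℕ) (hm : 1 ≤ m) (hm2 : m + 2 ≤ N) (j : ZMod N) :
    cm (e j) (qminus e m) =
      ((-1:ℤ)^j.val) • ∑ t ∈ Finset.range (m+2),
        ((-1:ℤ)^(t+1)) • cm (e j) (qq e m (j + 1 - (t : ZMod N))) := by
  have hN0 : 0 < N := by omega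
  have : NeZero N := ⟨by omega⟩
  set F : ZMod N → A := fun x => (-1:ℤ)^x.val • cm (e j) (qq e m x) with hF
  have step1 : cm (e j) (qminus e m) = ∑ i ∈ Finset.range N, (-1:ℤ)^i • cm (e j) (qq e m (i : ZMod N)) := by
    rw [qminus, cm_sum_right]
    exact Finset.sum_congr rfl (fun i _ => cm_zsmul_right _ _ _)
  have step2 : ∑ i ∈ Finset.range N, (-1:ℤ)^i • cm (e j) (qq e m (i : ZMod N))
      = ∑ x ∈ Finset.univ, F x := by
    refine Finset.sum_nbij' (fun i => ((i : ZMod N))) (fun x => x.val) ?_ ?_ ?_ ?_ ?_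
    · intro a ha; exact Finset.mem_univ _
    · intro x hx; exact Finset.mem_range.mpr (ZMod.val_lt x)
    · intro a ha
      exact ZMod.val_cast_of_lt (Finset.mem_range.mp ha)
    · intro x hx
      rw [ZMod.natCast_val, ZMod.cast_id]
    · intro a ha
      rw [hF]
      simp only
      rw [ZMod.val_cast_of_lt (Finset.mem_range.mp ha)]
  set S : Finset (ZMod N) := Finset.image (fun t : ℕ => j + 1 - (t:ZMod N)) (Finset.range (m+2)) with hS
  have step3 : ∑ x ∈ Finset.univ, F x = ∑ x ∈ S, F x := by
    refine (Finset.sum_subset (Finset.subset_univ S) ?_).symm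
    intro x _ hx
    have hne : ∀ t : ℕ, t < m + 2 → j + 1 - (t:ZMod N) ≠ x := by
      intro t ht hc
      exact hx (Finset.mem_image.mpr ⟨t, Finset.mem_range.mpr ht, hc⟩)
    have hz : cm (e j) (qq e m x) = 0 := by
      apply cm_qq_zero
      intro t ht
      apply cm_single h4
      · intro hc
        exact hne t (by omega) (by push_cast; linear_combination hc)
      · intro hc
        exact hne (t+1) (by omega) (by push_cast; linear_combination hc)
      · intro hc
        exact hne (t+2) (by omega) (by push_cast; linear_combination hc)
    rw [hF]; simp only [hz, smul_zero]
  have step4 : ∑ x ∈ S, F x = ∑ t ∈ Finset.range (m+2), F (j + 1 - (t:ZMod N)) := by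
    rw [hS]
    apply Finset.sum_image
    intro t1 h1 t2 h2 hc
    have ht1 : t1 < m + 2 := Finset.mem_range.mp h1
    have ht2 : t2 < m + 2 := Finset.mem_range.mp h2
    have hcc : ((t1 : ZMod N)) = ((t2 : ZMod N)) := by linear_combination -hc
    have := congrArg ZMod.val hcc
    rwa [ZMod.val_cast_of_lt (by omega : t1 < N),
      ZMod.val_cast_of_lt (by omega : t2 < N)] at this
  rw [step1, step2, step3, step4, Finset.smul_sum]
  apply Finset.sum_congr rfl
  intro t ht
  rw [hF]
  simp only
  have hsgn : (-1:ℤ)^((j + 1 - (t:ZMod N)).val) = (-1:ℤ)^j.val * (-1:ℤ)^(t+1) := by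
    rw [show j + 1 - (t:ZMod N) = j + (1 + (-(t:ZMod N))) by ring, sgn_add hNe hN0,
      sgn_add hNe hN0, sgn_neg hNe hN0]
    rw [show (1 : ZMod N) = ((1:ℕ) : ZMod N) by push_cast; rfl, sgn_natCast hNe hN0,
      sgn_natCast hNe hN0]
    ring
  rw [hsgn, mul_smul]
end

theorem stmt_6 {A : Type*} [NonUnitalRing A] (N : ℕ) (hN : 4 ≤ N) (hNe : Even N)
    (e : ZMod N → A)
    (h1 : ∀ i : ZMod N, e i * e i = 0)
    (h2 : ∀ i : ZMod N, e i * e (i + 1) * e i = e i)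
    (h3 : ∀ i : ZMod N, e (i + 1) * e i * e (i + 1) = e (i + 1))
    (h4 : ∀ i j : ZMod N, j ≠ i - 1 → j ≠ i → j ≠ i + 1 → e i * e j = e j * e i) :
    ∀ j : ZMod N,
      cm (e j) (qminus e 1) = ((-1 : ℤ) ^ j.val) • (-(qq e 2 j) + qq e 2 (j - 1)) ∧
      cm (e j) (qminus e 2) =
        ((-1 : ℤ) ^ j.val) • (-(qq e 3 j) - qq e 3 (j - 2) - (4 : ℤ) • qq e 1 j) ∧
      ∀ m : ℕ, 3 ≤ m → m ≤ N - 2 →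
        cm (e j) (qminus e m) =
          ((-1 : ℤ) ^ j.val) •
            (-(qq e (m + 1) j) - ((-1 : ℤ) ^ m) • qq e (m + 1) (j - (m : ZMod N))
              - qq e (m - 1) j - ((-1 : ℤ) ^ m) • qq e (m - 1) (j - (m : ZMod N) + 2)) := by
  intro j
  refine ⟨?_, ?_, ?_⟩
  · -- m = 1
    rw [main_sum hN hNe h4 1 (by omega) (by omega) j]
    congr 1
    rw [Finset.sum_range_succ, Finset.sum_range_succ, Finset.sum_range_succ,
      Finset.sum_range_zero]
    have hA : cm (e j) (qq e 1 (j + 1 - ((0:ℕ):ZMod N))) = qq e 2 j := by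
      rw [show j + 1 - ((0:ℕ):ZMod N) = j + 1 by push_cast; ring]; rfl
    have hB : cm (e j) (qq e 1 (j + 1 - ((1:ℕ):ZMod N))) = 0 := by
      rw [show j + 1 - ((1:ℕ):ZMod N) = j by push_cast; ring]
      show cm (e j) (e j) = 0
      rw [cm, sub_self]
    have hC : cm (e j) (qq e 1 (j + 1 - ((2:ℕ):ZMod N))) = -(qq e 2 (j - 1)) := by
      rw [show j + 1 - ((2:ℕ):ZMod N) = j - 1 by push_cast; ring]
      have : qq e 2 (j-1) = cm (e (j-1)) (e j) := by
        show cm (e (j-1)) (e (j-1+1)) = _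
        rw [show j - 1 + 1 = j by ring]
      rw [this]
      show cm (e j) (e (j-1)) = _
      rw [cm_swap]
    rw [hA, hB, hC]
    norm_num
  · -- m = 2
    rw [main_sum hN hNe h4 2 (by omega) (by omega) j]
    congr 1
    rw [Finset.sum_range_succ, Finset.sum_range_succ, Finset.sum_range_succ,
      Finset.sum_range_succ, Finset.sum_range_zero]
    have hA : cm (e j) (qq e 2 (j + 1 - ((0:ℕ):ZMod N))) = qq e 3 j := by
      rw [show j + 1 - ((0:ℕ):ZMod N) = j + 1 by push_cast; ring]; rfl
    have hB : cm (e j) (qq e 2 (j + 1 - ((1:ℕ):ZMod N))) = (-2:ℤ) • e j := by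
      rw [show j + 1 - ((1:ℕ):ZMod N) = j by push_cast; ring]
      exact C0_2 h1 h2 j
    have hC : cm (e j) (qq e 2 (j + 1 - ((2:ℕ):ZMod N))) = (2:ℤ) • e j := by
      rw [show j + 1 - ((2:ℕ):ZMod N) = j - 1 by push_cast; ring]
      exact C1_2 h1 h3 j
    have hD : cm (e j) (qq e 2 (j + 1 - ((3:ℕ):ZMod N))) = -(qq e 3 (j - 2)) := by
      rw [show j + 1 - ((3:ℕ):ZMod N) = j - ((2:ℕ):ZMod N) by push_cast; ring]
      have := Cmm hN h4 2 (by omega) (by omega) j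
      rw [this, show ((2:ℕ):ZMod N) = (2 : ZMod N) by push_cast; ring]
    rw [hA, hB, hC, hD]
    show _ = -(qq e 3 j) - qq e 3 (j-2) - (4:ℤ) • e j
    norm_num
    abel
  · -- general m
    intro m hm3 hmN
    rw [main_sum hN hNe h4 m (by omega) (by omega) j]
    congr 1
    rcases eq_or_lt_of_le hm3 with hc3 | hc3
    · -- m = 3
      subst hc3
      rw [Finset.sum_range_succ, Finset.sum_range_succ, Finset.sum_range_succ,
        Finset.sum_range_succ, Finset.sum_range_succ, Finset.sum_range_zero]
      have hA : cm (e j) (qq e 3 (j + 1 - ((0:ℕ):ZMod N))) = qq e 4 j := by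
        rw [show j + 1 - ((0:ℕ):ZMod N) = j + 1 by push_cast; ring]; rfl
      have hB : cm (e j) (qq e 3 (j + 1 - ((1:ℕ):ZMod N))) = 0 := by
        rw [show j + 1 - ((1:ℕ):ZMod N) = j by push_cast; ring]
        exact C0 hN h1 h2 h4 3 (by omega) (by omega) j
      have hC : cm (e j) (qq e 3 (j + 1 - ((2:ℕ):ZMod N))) = qq e 2 j - qq e 2 (j - 1) := by
        rw [show j + 1 - ((2:ℕ):ZMod N) = j - 1 by push_cast; ring]
        exact C1_3 hN (by omega) h1 h2 h3 h4 j
      have hD : cm (e j) (qq e 3 (j + 1 - ((3:ℕ):ZMod N))) = 0 := by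
        rw [show j + 1 - ((3:ℕ):ZMod N) = j - ((2:ℕ):ZMod N) by push_cast; ring]
        exact Cm1 hN h1 h3 h4 2 (by omega) (by omega) j
      have hE : cm (e j) (qq e 3 (j + 1 - ((4:ℕ):ZMod N)))
          = -(qq e 4 (j - ((3:ℕ):ZMod N))) := by
        rw [show j + 1 - ((4:ℕ):ZMod N) = j - ((3:ℕ):ZMod N) by push_cast; ring]
        exact Cmm hN h4 3 (by omega) (by omega) j
      rw [hA, hB, hC, hD, hE,
        show j - ((3:ℕ) : ZMod N) + 2 = j - 1 by push_cast; ring]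
      norm_num
      abel
    rcases eq_or_lt_of_le (show 4 ≤ m by omega) with hc4 | hc4
    · -- m = 4
      have hm4 : m = 4 := hc4.symm
      subst hm4
      rw [Finset.sum_range_succ, Finset.sum_range_succ, Finset.sum_range_succ,
        Finset.sum_range_succ, Finset.sum_range_succ, Finset.sum_range_succ,
        Finset.sum_range_zero]
      have hA : cm (e j) (qq e 4 (j + 1 - ((0:ℕ):ZMod N))) = qq e 5 j := by
        rw [show j + 1 - ((0:ℕ):ZMod N) = j + 1 by push_cast; ring]; rfl
      have hB : cm (e j) (qq e 4 (j + 1 - ((1:ℕ):ZMod N))) = 0 := by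
        rw [show j + 1 - ((1:ℕ):ZMod N) = j by push_cast; ring]
        exact C0 hN h1 h2 h4 4 (by omega) (by omega) j
      have hC : cm (e j) (qq e 4 (j + 1 - ((2:ℕ):ZMod N))) = qq e 3 j := by
        rw [show j + 1 - ((2:ℕ):ZMod N) = j - 1 by push_cast; ring]
        exact C1 hN h1 h2 h3 h4 3 (by omega) (by omega) j
      have hD : cm (e j) (qq e 4 (j + 1 - ((3:ℕ):ZMod N)))
          = -(qq e 3 (j - ((2:ℕ):ZMod N))) := by
        rw [show j + 1 - ((3:ℕ):ZMod N) = j - ((2:ℕ):ZMod N) by push_cast; ring]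
        exact Cm2 hN h1 h2 h3 h4 2 (by omega) (by omega) j
      have hE : cm (e j) (qq e 4 (j + 1 - ((4:ℕ):ZMod N))) = 0 := by
        rw [show j + 1 - ((4:ℕ):ZMod N) = j - ((3:ℕ):ZMod N) by push_cast; ring]
        exact Cm1 hN h1 h3 h4 3 (by omega) (by omega) j
      have hF : cm (e j) (qq e 4 (j + 1 - ((5:ℕ):ZMod N)))
          = -(qq e 5 (j - ((4:ℕ):ZMod N))) := by
        rw [show j + 1 - ((5:ℕ):ZMod N) = j - ((4:ℕ):ZMod N) by push_cast; ring]
        exact Cmm hN h4 4 (by omega) (by omega) j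
      rw [hA, hB, hC, hD, hE, hF,
        show j - ((4:ℕ) : ZMod N) + 2 = j - ((2:ℕ):ZMod N) by push_cast; ring]
      norm_num
      abel
    · -- m ≥ 5
      have hm5 : 5 ≤ m := hc4
      have hsub : ({0, 2, m-1, m+1} : Finset ℕ) ⊆ Finset.range (m+2) := by
        intro t ht
        simp only [Finset.mem_insert, Finset.mem_singleton] at ht
        rw [Finset.mem_range]
        rcases ht with h|h|h|h <;> omega
      have hzero : ∀ t ∈ Finset.range (m+2), t ∉ ({0, 2, m-1, m+1} : Finset ℕ) →
          ((-1:ℤ)^(t+1)) • cm (e j) (qq e m (j + 1 - (t:ZMod N))) = 0 := by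
        intro t ht htn
        rw [Finset.mem_range] at ht
        simp only [Finset.mem_insert, Finset.mem_singleton] at htn
        push_neg at htn
        obtain ⟨ht0, ht2, htm1, htm2⟩ := htn
        by_cases he1 : t = 1
        · subst he1
          rw [show j + 1 - ((1:ℕ):ZMod N) = j by push_cast; ring,
            C0 hN h1 h2 h4 m (by omega) (by omega) j, smul_zero]
        by_cases hem : t = m
        · subst hem
          rw [show j + 1 - ((t:ℕ):ZMod N) = j - ((t-1 : ℕ):ZMod N) by
            push_cast [Nat.cast_sub (by omega : 1 ≤ t)]; ring]
          have hx := Cm1 hN h1 h3 h4 (t-1) (by omega) (by omega) j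
          rw [show t - 1 + 1 = t by omega] at hx
          rw [hx, smul_zero]
        · rw [show j + 1 - ((t:ℕ):ZMod N) = j - ((t-1 : ℕ):ZMod N) by
            push_cast [Nat.cast_sub (by omega : 1 ≤ t)]; ring,
            Cmid hN h1 h2 h3 h4 (t-1) (by omega) m (by omega) (by omega) j, smul_zero]
      rw [← Finset.sum_subset hsub hzero]
      have hd1 : (0:ℕ) ∉ ({2, m-1, m+1} : Finset ℕ) := by
        intro hx; simp only [Finset.mem_insert, Finset.mem_singleton] at hx; omega
      have hd2 : (2:ℕ) ∉ ({m-1, m+1} : Finset ℕ) := by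
        intro hx; simp only [Finset.mem_insert, Finset.mem_singleton] at hx; omega
      have hd3 : (m-1) ∉ ({m+1} : Finset ℕ) := by
        intro hx; simp only [Finset.mem_singleton] at hx; omega
      rw [Finset.sum_insert hd1, Finset.sum_insert hd2, Finset.sum_insert hd3,
        Finset.sum_singleton]
      have hA : cm (e j) (qq e m (j + 1 - ((0:ℕ):ZMod N))) = qq e (m+1) j := by
        rw [show j + 1 - ((0:ℕ):ZMod N) = j + 1 by push_cast; ring,
          ← qq_succ m (by omega) j]
      have hB : cm (e j) (qq e m (j + 1 - ((2:ℕ):ZMod N))) = qq e (m-1) j := by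
        rw [show j + 1 - ((2:ℕ):ZMod N) = j - 1 by push_cast; ring]
        have hx := C1 hN h1 h2 h3 h4 (m-1) (by omega) (by omega) j
        rwa [show m - 1 + 1 = m by omega] at hx
      have hC : cm (e j) (qq e m (j + 1 - ((m-1 : ℕ):ZMod N)))
          = -(qq e (m-1) (j - ((m-2 : ℕ):ZMod N))) := by
        rw [show j + 1 - ((m-1:ℕ):ZMod N) = j - ((m-2 : ℕ):ZMod N) by
          push_cast [Nat.cast_sub (by omega : 1 ≤ m), Nat.cast_sub (by omega : 2 ≤ m)]; ring]
        have hx := Cm2 hN h1 h2 h3 h4 (m-2) (by omega) (by omega) j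
        rwa [show m - 2 + 2 = m by omega, show m - 2 + 1 = m - 1 by omega] at hx
      have hD : cm (e j) (qq e m (j + 1 - ((m+1 : ℕ):ZMod N)))
          = -(qq e (m+1) (j - ((m : ℕ):ZMod N))) := by
        rw [show j + 1 - ((m+1:ℕ):ZMod N) = j - ((m : ℕ):ZMod N) by push_cast; ring]
        exact Cmm hN h4 m (by omega) (by omega) j
      have hs1 : ((-1:ℤ))^(m-1+1) = (-1:ℤ)^m := by rw [show m-1+1 = m by omega]
      have hs2 : ((-1:ℤ))^(m+1+1) = (-1:ℤ)^m := by
        rw [show m+1+1 = m+2 by omega, pow_add]; norm_num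
      rw [hA, hB, hC, hD, hs1, hs2,
        show j - ((m:ℕ) : ZMod N) + 2 = j - ((m-2:ℕ):ZMod N) by
          push_cast [Nat.cast_sub (by omega : 2 ≤ m)]; ring]
      norm_num
      abel
end

section
/- The following commutation relations hold: [H_e, H_o] = q_-^2; for every s ≥ 1 with 2s + 1 ≤ N − 1, [H_e, q_+^{2s}] = 0 and [H_o, q_+^{2s}] = 0; and for every s ≥ 0 with 2s + 2 ≤ N − 1, [H_e, q_e^{2s+1}] = 0 and [H_o, q_o^{2s+1}] = 0. -/
set_option linter.unusedSectionVars false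

namespace TL7

variable {A : Type*} [NonUnitalRing A] {N : ℕ}

lemma cm_eq_zero_of_comm {x y : A} (h : x * y = y * x) : cm x y = 0 := sub_eq_zero_of_eq h

lemma cm_zero_left (y : A) : cm 0 y = 0 := by simp [cm]

lemma cm_zero_right (x : A) : cm x 0 = 0 := by simp [cm]

lemma cm_skew (x y : A) : cm x y = - cm y x := by rw [cm, cm, neg_sub]

lemma jacobi (a b c : A) : cm a (cm b c) = cm (cm a b) c + cm b (cm a c) := by
  simp only [cm, mul_sub, sub_mul, mul_assoc]; abel

lemma jac2 {a b : A} (h : cm a b = 0) (x : A) : cm a (cm b x) = cm b (cm a x) := by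
  rw [jacobi, h, cm_zero_left, zero_add]

lemma mul_mul_comm' {x a b : A} (ha : x*a = a*x) (hb : x*b = b*x) : x*(a*b) = (a*b)*x := by
  rw [← mul_assoc, ha, mul_assoc, hb, ← mul_assoc]

lemma aux1 {x y R : A} (hc : x * R = R * x) (hp : x * y * x = x) : x * (y * R) * x = x * R := by
  rw [← mul_assoc, mul_assoc (x*y) R x, ← hc, ← mul_assoc, hp]

lemma aux2 {x y R : A} (hc : x * R = R * x) (hp : x * y * x = x) : x * (R * y) * x = R * x := by
  rw [← mul_assoc, hc, mul_assoc R x y, mul_assoc R (x*y) x, hp]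

lemma eqe_core {x y R : A} (hc : x*R = R*x) (hp : x*y*x = x) : x * (cm y R) * x = 0 := by
  have : x * (y * R - R * y) * x = x * (y*R) * x - x * (R*y) * x := by
    rw [mul_sub, sub_mul]
  rw [cm, this, aux1 hc hp, aux2 hc hp, hc, sub_self]

lemma eqe_core' {x y R : A} (hc : x*R = R*x) (hp : x*y*x = x) : x * (cm R y) * x = 0 := by
  have : x * (R * y - y * R) * x = x * (R*y) * x - x * (y*R) * x := by
    rw [mul_sub, sub_mul]
  rw [cm, this, aux1 hc hp, aux2 hc hp, hc, sub_self]

lemma qq_succ (e : ZMod N → A) (m : ℕ) (hm : 1 ≤ m) (i : ZMod N) :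
    qq e (m+1) i = cm (e i) (qq e m (i+1)) := by
  cases m with
  | zero => exact absurd hm (by omega)
  | succ k => rfl

section Main

variable (hN : 4 ≤ N) (hNe : Even N) (e : ZMod N → A)
    (h1 : ∀ i : ZMod N, e i * e i = 0)
    (h2 : ∀ i : ZMod N, e i * e (i + 1) * e i = e i)
    (h3 : ∀ i : ZMod N, e (i + 1) * e i * e (i + 1) = e (i + 1))
    (h4 : ∀ i j : ZMod N, j ≠ i - 1 → j ≠ i → j ≠ i + 1 → e i * e j = e j * e i)

include hN

lemma castN1 : ((N - 1 : ℕ) : ZMod N) = -1 := by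
  rw [Nat.cast_sub (by omega), ZMod.natCast_self]; ring

include h4 in
lemma ecomm (i : ZMod N) (d : ℕ) (h2d : 2 ≤ d) (hd : d ≤ N - 2) :
    e i * e (i + (d:ℕ)) = e (i + (d:ℕ)) * e i := by
  have _i : NeZero N := ⟨by omega⟩
  have hmod : ∀ a : ℕ, a < N → a % N = a := fun a ha => Nat.mod_eq_of_lt ha
  have hd0 : ((d:ℕ) : ZMod N) ≠ 0 := by
    rw [Ne, ZMod.natCast_eq_zero_iff]
    intro hdvd
    have := Nat.le_of_dvd (by omega) hdvd
    omega
  have hd1 : ((d:ℕ) : ZMod N) ≠ 1 := by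
    have : ((1:ℕ) : ZMod N) = 1 := by norm_num
    rw [← this, Ne, ZMod.natCast_eq_natCast_iff', hmod d (by omega), hmod 1 (by omega)]
    omega
  have hdm : ((d:ℕ) : ZMod N) ≠ -1 := by
    rw [← castN1 hN, Ne, ZMod.natCast_eq_natCast_iff', hmod d (by omega), hmod (N-1) (by omega)]
    omega
  apply h4
  · intro h
    rw [sub_eq_add_neg] at h
    exact hdm (add_left_cancel h)
  · intro h
    have h' : i + ((d:ℕ) : ZMod N) = i + 0 := by rw [add_zero]; exact h
    exact hd0 (add_left_cancel h')
  · intro h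
    exact hd1 (add_left_cancel h)

include h4 in
lemma comm_qq (x : A) : ∀ (m : ℕ) (i : ZMod N),
    (∀ t : ℕ, t < m → x * e (i + (t:ℕ)) = e (i + (t:ℕ)) * x) →
    x * qq e m i = qq e m i * x := by
  intro m
  induction m using Nat.strong_induction_on with
  | _ m ih =>
    match m with
    | 0 => intro i h; simp [qq]
    | 1 =>
      intro i h
      have := h 0 (by omega)
      simpa [qq] using this
    | (m+2) =>
      intro i h
      have hi : x * e i = e i * x := by simpa using h 0 (by omega)
      have hq : x * qq e (m+1) (i+1) = qq e (m+1) (i+1) * x := by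
        apply ih (m+1) (by omega)
        intro t ht
        have h' := h (t+1) (by omega)
        rw [show (i+1) + ((t:ℕ) : ZMod N) = i + (((t+1 : ℕ)) : ZMod N) by push_cast; ring]
        exact h'
      show x * cm (e i) (qq e (m+1) (i+1)) = cm (e i) (qq e (m+1) (i+1)) * x
      rw [cm, mul_sub, sub_mul, mul_mul_comm' hi hq, mul_mul_comm' hq hi]

include h4 in
lemma comm_qq_win (j i : ZMod N) (r : ℕ)
    (h : ∀ t : ℕ, t < r → ∃ d : ℕ, 2 ≤ d ∧ d ≤ N - 2 ∧
      (i + ((t:ℕ) : ZMod N) = j + ((d:ℕ) : ZMod N) ∨ j = i + ((t:ℕ) : ZMod N) + ((d:ℕ) : ZMod N))) :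
    e j * qq e r i = qq e r i * e j := by
  apply comm_qq hN e h4
  intro t ht
  obtain ⟨d, hd2, hdN, hc⟩ := h t ht
  rcases hc with hc | hc
  · rw [hc]; exact ecomm hN e h4 j d hd2 hdN
  · rw [hc]; exact (ecomm hN e h4 (i + (t:ℕ)) d hd2 hdN).symm

include h4 in
lemma cm_far (i : ZMod N) (m d : ℕ) (hmd : m + 1 ≤ d) (hd : d ≤ N - 2) :
    cm (e (i + ((d:ℕ) : ZMod N))) (qq e m i) = 0 := by
  apply cm_eq_zero_of_comm
  apply comm_qq_win hN e h4
  intro t ht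
  refine ⟨d - t, by omega, by omega, Or.inr ?_⟩
  rw [Nat.cast_sub (by omega)]
  ring

include h4 in
lemma qq_mir : ∀ m : ℕ, 1 ≤ m → m + 1 ≤ N - 1 → ∀ i : ZMod N,
    qq e (m+1) i = cm (qq e m i) (e (i + ((m:ℕ) : ZMod N))) := by
  intro m
  induction m using Nat.strong_induction_on with
  | _ m ih =>
    match m with
    | 0 => intro h _ _; exact absurd h (by omega)
    | 1 =>
      intro _ _ i
      show cm (e i) (qq e 1 (i+1)) = _
      simp [qq]
    | (m+2) =>
      intro _ hmN i
      have h1m : 1 ≤ m + 1 := by omega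
      rw [qq_succ e (m+2) (by omega) i,
        ih (m+1) (by omega) h1m (by omega) (i+1)]
      have hzero : cm (e i) (e ((i+1) + ((m+1 : ℕ) : ZMod N))) = 0 := by
        have : (i+1) + (((m+1) : ℕ) : ZMod N) = i + (((m+2):ℕ) : ZMod N) := by push_cast; ring
        rw [this]
        exact cm_eq_zero_of_comm (ecomm hN e h4 i (m+2) (by omega) (by omega))
      rw [jacobi, hzero, cm_zero_right, add_zero, ← qq_succ e (m+1) h1m i]
      congr 1
      push_cast; ring

include h2 h4 in
lemma eqeL (j : ZMod N) (t : ℕ) (htN : t + 2 ≤ N - 2) :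
    e j * qq e (t+2) (j+1) * e j = 0 := by
  have hc : e j * qq e (t+1) (j+1+1) = qq e (t+1) (j+1+1) * e j := by
    apply comm_qq_win hN e h4
    intro s hs
    exact ⟨s+2, by omega, by omega, Or.inl (by push_cast; ring)⟩
  show e j * cm (e (j+1)) (qq e (t+1) (j+1+1)) * e j = 0
  exact eqe_core hc (h2 j)

include h3 h4 in
lemma eqeR (i : ZMod N) (t : ℕ) (htN : t + 2 ≤ N - 2) :
    e (i + (((t+2) : ℕ) : ZMod N)) * qq e (t+2) i * e (i + (((t+2) : ℕ) : ZMod N)) = 0 := by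
  have hc : e (i + (((t+2):ℕ) : ZMod N)) * qq e (t+1) i = qq e (t+1) i * e (i + (((t+2):ℕ) : ZMod N)) := by
    apply comm_qq_win hN e h4
    intro s hs
    refine ⟨t+2-s, by omega, by omega, Or.inr ?_⟩
    rw [Nat.cast_sub (by omega)]
    push_cast; ring
  have hp : e (i + (((t+2):ℕ) : ZMod N)) * e (i + (((t+1):ℕ) : ZMod N)) * e (i + (((t+2):ℕ) : ZMod N))
      = e (i + (((t+2):ℕ) : ZMod N)) := by
    have hcast : (i + (((t+1):ℕ) : ZMod N)) + 1 = i + (((t+2):ℕ) : ZMod N) := by push_cast; ring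
    have := h3 (i + (((t+1):ℕ) : ZMod N))
    rwa [hcast] at this
  rw [qq_mir hN e h4 (t+1) (by omega) (by omega) i]
  exact eqe_core' hc hp

include h1 h2 h4 in
lemma eaL1 (i : ZMod N) (t : ℕ) (ht : 1 ≤ t) (htN : t + 2 ≤ N - 1) :
    e i * qq e (t+2) i = 0 := by
  show e i * cm (e i) (qq e (t+1) (i+1)) = 0
  obtain ⟨u, rfl⟩ : ∃ u, t = u + 1 := ⟨t - 1, by omega⟩
  rw [cm, mul_sub, ← mul_assoc, h1 i, zero_mul, ← mul_assoc]
  have := eqeL hN e h2 h4 i u (by omega)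
  rw [this]  -- ?
  simp

include h1 h2 h4 in
lemma eaL2 (i : ZMod N) (t : ℕ) (ht : 1 ≤ t) (htN : t + 2 ≤ N - 1) :
    qq e (t+2) i * e i = 0 := by
  show cm (e i) (qq e (t+1) (i+1)) * e i = 0
  obtain ⟨u, rfl⟩ : ∃ u, t = u + 1 := ⟨t - 1, by omega⟩
  rw [cm, sub_mul, mul_assoc (qq e (u+1+1) (i+1)) (e i) (e i), h1 i, mul_zero]
  have := eqeL hN e h2 h4 i u (by omega)
  rw [this]
  simp

include h1 h3 h4 in
lemma eaR1 (i : ZMod N) (t : ℕ) (ht : 1 ≤ t) (htN : t + 2 ≤ N - 1) :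
    e (i + (((t+1):ℕ) : ZMod N)) * qq e (t+2) i = 0 := by
  rw [qq_mir hN e h4 (t+1) (by omega) (by omega) i]
  obtain ⟨u, rfl⟩ : ∃ u, t = u + 1 := ⟨t - 1, by omega⟩
  rw [cm, mul_sub, ← mul_assoc, ← mul_assoc, h1 (i + (((u+2):ℕ) : ZMod N)), zero_mul]
  have := eqeR hN e h3 h4 i u (by omega)
  rw [this]
  simp

include h1 h3 h4 in
lemma eaR2 (i : ZMod N) (t : ℕ) (ht : 1 ≤ t) (htN : t + 2 ≤ N - 1) :
    qq e (t+2) i * e (i + (((t+1):ℕ) : ZMod N)) = 0 := by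
  rw [qq_mir hN e h4 (t+1) (by omega) (by omega) i]
  obtain ⟨u, rfl⟩ : ∃ u, t = u + 1 := ⟨t - 1, by omega⟩
  rw [cm, sub_mul, mul_assoc (qq e (u+2) i), h1 (i + (((u+2):ℕ) : ZMod N)), mul_zero]
  have := eqeR hN e h3 h4 i u (by omega)
  rw [this]
  simp

include h1 h2 h3 h4 in
lemma uLem (i : ZMod N) (t : ℕ) (htN : t + 4 ≤ N - 1) :
    cm (e (i+1)) (qq e (t+4) i) = qq e (t+3) (i+1) := by
  have hQdef : qq e (t+4) i = cm (e i) (qq e (t+3) (i+1)) := rfl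
  have hQ : qq e (t+3) (i+1) = cm (e (i+1)) (qq e (t+2) (i+1+1)) := rfl
  set Q := qq e (t+3) (i+1) with hQs
  set R := qq e (t+2) (i+1+1) with hRs
  have hQ1 : e (i+1) * Q = 0 := eaL1 hN e h1 h2 h4 (i+1) (t+1) (by omega) (by omega)
  have hQ2 : Q * e (i+1) = 0 := eaL2 hN e h1 h2 h4 (i+1) (t+1) (by omega) (by omega)
  have hR : e i * R = R * e i := by
    apply comm_qq_win hN e h4
    intro s hs
    exact ⟨s+2, by omega, by omega, Or.inl (by push_cast; ring)⟩
  have h3i : e (i+1) * e i * e (i+1) = e (i+1) := h3 i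
  have hA2 : e (i+1) * (Q * e i) = 0 := by rw [← mul_assoc, hQ1, zero_mul]
  have hA3 : (e i * Q) * e (i+1) = 0 := by rw [mul_assoc, hQ2, mul_zero]
  have hA1 : e (i+1) * (e i * Q) = e (i+1) * R - (e (i+1) * R) * (e i * e (i+1)) := by
    rw [hQ, cm, mul_sub, mul_sub]
    congr 1
    · rw [← mul_assoc, ← mul_assoc, h3i]
    · rw [← mul_assoc (e i) R (e (i+1)), hR, mul_assoc R (e i) (e (i+1)), ← mul_assoc]
  have hA4 : (Q * e i) * e (i+1) = (e (i+1) * R) * (e i * e (i+1)) - R * e (i+1) := by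
    rw [hQ, cm, sub_mul, sub_mul]
    congr 1
    · rw [mul_assoc (e (i+1) * R) (e i) (e (i+1))]
    · rw [mul_assoc R (e (i+1)) (e i), mul_assoc R (e (i+1) * e i) (e (i+1)), h3i]
  calc cm (e (i+1)) (qq e (t+4) i)
      = e (i+1)*(e i*Q) - e (i+1)*(Q*e i) - ((e i*Q)*e (i+1) - (Q*e i)*e (i+1)) := by
        rw [hQdef, cm, cm, mul_sub, sub_mul]
    _ = Q := by rw [hA1, hA2, hA3, hA4, hQ, cm]; abel

include h1 h2 h3 h4 in
lemma wLem (i : ZMod N) (t : ℕ) (htN : t + 4 ≤ N - 1) :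
    cm (e (i + (((t+2):ℕ) : ZMod N))) (qq e (t+4) i) = -(qq e (t+3) i) := by
  have hmir : qq e (t+4) i = cm (qq e (t+3) i) (e (i + (((t+3):ℕ) : ZMod N))) :=
    qq_mir hN e h4 (t+3) (by omega) (by omega) i
  have hmir' : qq e (t+3) i = cm (qq e (t+2) i) (e (i + (((t+2):ℕ) : ZMod N))) :=
    qq_mir hN e h4 (t+2) (by omega) (by omega) i
  set f := e (i + (((t+2):ℕ) : ZMod N)) with hfs
  set g := e (i + (((t+3):ℕ) : ZMod N)) with hgs
  set Q' := qq e (t+3) i with hQs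
  set R' := qq e (t+2) i with hRs
  have hfQ : f * Q' = 0 := eaR1 hN e h1 h3 h4 i (t+1) (by omega) (by omega)
  have hQf : Q' * f = 0 := eaR2 hN e h1 h3 h4 i (t+1) (by omega) (by omega)
  have hgR : g * R' = R' * g := by
    apply comm_qq_win hN e h4
    intro s hs
    refine ⟨t+3-s, by omega, by omega, Or.inr ?_⟩
    rw [Nat.cast_sub (by omega)]
    push_cast; ring
  have hp : f * g * f = f := by
    have hcast : (i + (((t+2):ℕ) : ZMod N)) + 1 = i + (((t+3):ℕ) : ZMod N) := by push_cast; ring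
    have := h2 (i + (((t+2):ℕ) : ZMod N))
    rwa [hcast] at this
  have hB1 : f * (Q' * g) = 0 := by rw [← mul_assoc, hfQ, zero_mul]
  have hB4 : (g * Q') * f = 0 := by rw [mul_assoc, hQf, mul_zero]
  have hB2 : f * (g * Q') = (f * R') * (g * f) - f * R' := by
    rw [hmir', cm, mul_sub, mul_sub]
    congr 1
    · rw [← mul_assoc g R' f, hgR, mul_assoc R' g f, ← mul_assoc]
    · rw [← mul_assoc g f R', ← mul_assoc, ← mul_assoc, hp]
  have hB3 : (Q' * g) * f = R' * f - (f * R') * (g * f) := by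
    rw [hmir', cm, sub_mul, sub_mul]
    congr 1
    · rw [mul_assoc R' f g, mul_assoc R' (f*g) f, hp]
    · rw [mul_assoc (f * R') g f]
  calc cm f (qq e (t+4) i)
      = f*(Q'*g) - f*(g*Q') - ((Q'*g)*f - (g*Q')*f) := by
        rw [hmir, cm, cm, mul_sub, sub_mul]
    _ = -(Q') := by rw [hB1, hB2, hB3, hB4, hmir', cm]; abel

include h4 in
lemma e2Lem (i : ZMod N) (m : ℕ) (hm1 : 1 ≤ m) (hmN : m ≤ N - 2) :
    cm (e (i + ((m : ℕ) : ZMod N))) (qq e m i) = -(qq e (m+1) i) := by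
  rw [qq_mir hN e h4 m hm1 (by omega) i, cm_skew]

include h1 h2 h4 in
lemma z0 (i : ZMod N) (m : ℕ) (hm : m = 1 ∨ (3 ≤ m ∧ m ≤ N - 1)) :
    cm (e i) (qq e m i) = 0 := by
  rcases hm with rfl | ⟨hm3, hmN⟩
  · simp [qq, cm]
  · obtain ⟨t, rfl⟩ : ∃ t, m = t + 2 := ⟨m - 2, by omega⟩
    rw [cm, eaL1 hN e h1 h2 h4 i t (by omega) (by omega),
      eaL2 hN e h1 h2 h4 i t (by omega) (by omega), sub_zero]

include h1 h3 h4 in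
lemma z1 (i : ZMod N) (t : ℕ) (ht : 1 ≤ t) (htN : t + 2 ≤ N - 1) :
    cm (e (i + (((t+1):ℕ) : ZMod N))) (qq e (t+2) i) = 0 := by
  rw [cm, eaR1 hN e h1 h3 h4 i t ht htN, eaR2 hN e h1 h3 h4 i t ht htN, sub_zero]

include h1 h2 h3 h4 in
lemma zint : ∀ k : ℕ, 2 ≤ k → ∀ (m : ℕ) (i : ZMod N), k + 3 ≤ m → m ≤ N - 1 →
    cm (e (i + ((k : ℕ) : ZMod N))) (qq e m i) = 0 := by
  intro k hk
  induction k, hk using Nat.le_induction with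
  | base =>
    intro m i hm hmN
    obtain ⟨t, rfl⟩ : ∃ t, m = t + 5 := ⟨m - 5, by omega⟩
    have hcom : cm (e (i + ((2 : ℕ) : ZMod N))) (e i) = 0 :=
      cm_eq_zero_of_comm (ecomm hN e h4 i 2 (by omega) (by omega)).symm
    have hexp : qq e (t+5) i = cm (e i) (qq e (t+4) (i+1)) := rfl
    rw [hexp, jac2 hcom]
    have hcast : (i + ((2:ℕ) : ZMod N)) = (i+1)+1 := by push_cast; ring
    rw [hcast, uLem hN e h1 h2 h3 h4 (i+1) t (by omega)]
    apply cm_eq_zero_of_comm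
    apply comm_qq_win hN e h4
    intro s hs
    exact ⟨s+2, by omega, by omega, Or.inl (by push_cast; ring)⟩
  | succ k hk2 ih =>
    intro m i hm hmN
    obtain ⟨t, rfl⟩ : ∃ t, m = t + 2 := ⟨m - 2, by omega⟩
    have hcom : cm (e (i + (((k+1) : ℕ) : ZMod N))) (e i) = 0 :=
      cm_eq_zero_of_comm (ecomm hN e h4 i (k+1) (by omega) (by omega)).symm
    have hexp : qq e (t+2) i = cm (e i) (qq e (t+1) (i+1)) := rfl
    rw [hexp, jac2 hcom]
    have hcast : (i + (((k+1):ℕ) : ZMod N)) = (i+1) + ((k : ℕ) : ZMod N) := by push_cast; ring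
    rw [hcast, ih (t+1) (i+1) (by omega) (by omega), cm_zero_right]

omit hN

lemma cm_sum_sum {ι κ : Type*} (s : Finset ι) (t : Finset κ) (f : ι → A) (g : κ → A) :
    cm (∑ x ∈ s, f x) (∑ y ∈ t, g y) = ∑ x ∈ s, ∑ y ∈ t, cm (f x) (g y) := by
  rw [cm, Finset.sum_mul_sum, Finset.sum_mul_sum, Finset.sum_comm (s := t) (t := s),
    ← Finset.sum_sub_distrib]
  apply Finset.sum_congr rfl
  intro x _
  rw [← Finset.sum_sub_distrib]
  rfl

lemma cast2_eq_zero_iff (k : ℕ) : ((k : ℕ) : ZMod 2) = 0 ↔ k % 2 = 0 := by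
  rw [show (0 : ZMod 2) = ((0:ℕ) : ZMod 2) from rfl, ZMod.natCast_eq_natCast_iff', Nat.zero_mod]

lemma cast2_eq_one_iff (k : ℕ) : ((k : ℕ) : ZMod 2) = 1 ↔ k % 2 = 1 := by
  rw [show (1 : ZMod 2) = ((1:ℕ) : ZMod 2) from rfl, ZMod.natCast_eq_natCast_iff']

/-- parity ring hom `ZMod N →+* ZMod 2` -/
def pr (hNe : Even N) : ZMod N →+* ZMod 2 := ZMod.castHom (even_iff_two_dvd.mp hNe) (ZMod 2)

include hNe in
lemma pr_natCast (k : ℕ) : pr hNe ((k : ℕ) : ZMod N) = ((k : ℕ) : ZMod 2) :=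
  map_natCast _ k

variable [NeZero N]

include hN in
lemma sum_range_univ (F : ZMod N → A) :
    ∑ i ∈ Finset.range N, F ((i : ℕ) : ZMod N) = ∑ x : ZMod N, F x := by
  refine Finset.sum_nbij' (fun a : ℕ => ((a : ℕ) : ZMod N)) (fun x : ZMod N => x.val)
    ?_ ?_ ?_ ?_ ?_
  · intro a _; exact Finset.mem_univ _
  · intro x _; exact Finset.mem_range.mpr (ZMod.val_lt x)
  · intro a ha; exact ZMod.val_cast_of_lt (Finset.mem_range.mp ha)
  · intro x _; exact ZMod.natCast_rightInverse x
  · intro a _; rfl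

lemma sum_univ_shift (F : ZMod N → A) (c : ZMod N) :
    ∑ x : ZMod N, F x = ∑ x : ZMod N, F (x + c) :=
  (Fintype.sum_equiv (Equiv.addRight c) _ _ (fun _ => rfl)).symm

include hN in
lemma sum_univ_sub (x : ZMod N) (F : ZMod N → A) :
    ∑ y : ZMod N, F y = ∑ k ∈ Finset.range N, F (x - ((k : ℕ) : ZMod N)) := by
  rw [sum_range_univ hN (fun y => F (x - y))]
  exact Fintype.sum_equiv (Equiv.subLeft x) _ _ (fun y => by simp [Equiv.subLeft, sub_sub_cancel])

include hN hNe in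
lemma qev_eq (m : ℕ) :
    qev e m = ∑ x : ZMod N, if pr hNe x = 0 then qq e m x else 0 := by
  rw [qev, ← sum_range_univ hN (fun x => if pr hNe x = 0 then qq e m x else 0)]
  apply Finset.sum_congr rfl
  intro i _
  by_cases h : Even i
  · rw [if_pos h, if_pos (by rw [pr_natCast hNe, cast2_eq_zero_iff]; exact Nat.even_iff.mp h)]
  · rw [if_neg h, if_neg (by rw [pr_natCast hNe, cast2_eq_zero_iff]; intro hc; exact h (Nat.even_iff.mpr hc))]

include hN hNe in
lemma qod_eq (m : ℕ) :
    qod e m = ∑ x : ZMod N, if pr hNe x = 1 then qq e m x else 0 := by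
  rw [qod, ← sum_range_univ hN (fun x => if pr hNe x = 1 then qq e m x else 0)]
  apply Finset.sum_congr rfl
  intro i _
  by_cases h : Odd i
  · rw [if_pos h, if_pos (by rw [pr_natCast hNe, cast2_eq_one_iff]; exact Nat.odd_iff.mp h)]
  · rw [if_neg h, if_neg (by rw [pr_natCast hNe, cast2_eq_one_iff]; intro hc; exact h (Nat.odd_iff.mpr hc))]

include hN in
lemma qplus_eq (m : ℕ) : qplus e m = ∑ x : ZMod N, qq e m x := by
  rw [qplus, sum_range_univ hN (fun x => qq e m x)]

include hN hNe in
lemma qminus_eq2 :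
    qminus e 2 = (∑ x : ZMod N, if pr hNe x = 0 then qq e 2 x else 0)
      - ∑ x : ZMod N, if pr hNe x = 1 then qq e 2 x else 0 := by
  have step : ∀ i : ℕ, ((-1 : ℤ) ^ i) • qq e 2 ((i : ℕ) : ZMod N)
      = (if Even i then qq e 2 ((i:ℕ) : ZMod N) else 0)
        - (if Odd i then qq e 2 ((i:ℕ) : ZMod N) else 0) := by
    intro i
    rcases Nat.even_or_odd i with h | h
    · rw [h.neg_one_pow, one_smul, if_pos h,
        if_neg (by simp [Nat.odd_iff, Nat.even_iff.mp h]), sub_zero]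
    · rw [h.neg_one_pow, if_pos h,
        if_neg (by simp [Nat.even_iff, Nat.odd_iff.mp h]), zero_sub, neg_smul, one_smul]
  rw [qminus, Finset.sum_congr rfl (fun i _ => step i), Finset.sum_sub_distrib]
  congr 1
  · exact qev_eq hN hNe e 2
  · exact qod_eq hN hNe e 2

include hN

lemma sum_indicator (c : ℕ) (v : A) (hc : c < N) :
    (∑ k ∈ Finset.range N, if k = c then v else 0) = v := by
  rw [Finset.sum_ite_eq' (Finset.range N) c (fun _ => v), if_pos (Finset.mem_range.mpr hc)]

include hNe h1 h2 h3 h4 in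
lemma term_ev (x : ZMod N) (m k : ℕ) (hm2 : m % 2 = 1) (hmN : m ≤ N - 2)
    (hk2 : k % 2 = 0) (hkN : k < N) :
    cm (e x) (qq e m (x - ((k:ℕ) : ZMod N))) = 0 := by
  have hNN : N % 2 = 0 := Nat.even_iff.mp hNe
  have hxi : (x - ((k:ℕ) : ZMod N)) + ((k:ℕ) : ZMod N) = x := by ring
  by_cases hk0 : k = 0
  · subst hk0
    have h0 : x - ((0:ℕ) : ZMod N) = x := by push_cast; ring
    rw [h0]
    rcases Nat.lt_or_ge m 3 with h | h
    · exact z0 hN e h1 h2 h4 x m (Or.inl (by omega))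
    · exact z0 hN e h1 h2 h4 x m (Or.inr ⟨h, by omega⟩)
  by_cases hkm : k = m - 1 ∧ 3 ≤ m
  · obtain ⟨t, rfl⟩ : ∃ t, m = t + 2 := ⟨m - 2, by omega⟩
    have hk' : k = t + 1 := by omega
    subst hk'
    have h := z1 hN e h1 h3 h4 (x - (((t+1):ℕ) : ZMod N)) t (by omega) (by omega)
    rwa [hxi] at h
  by_cases hint : 2 ≤ k ∧ k + 3 ≤ m
  · have h := zint hN e h1 h2 h3 h4 k hint.1 m (x - ((k:ℕ) : ZMod N)) hint.2 (by omega)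
    rwa [hxi] at h
  · have h := cm_far hN e h4 (x - ((k:ℕ) : ZMod N)) m k (by omega) (by omega)
    rwa [hxi] at h

include hNe h1 h2 h3 h4 in
lemma term_plus (x : ZMod N) (m k : ℕ) (hm4 : 4 ≤ m) (hmN : m ≤ N - 2) (hkN : k < N) :
    cm (e x) (qq e m (x - ((k:ℕ) : ZMod N))) =
      (if k = N-1 then qq e (m+1) x else 0) + (if k = 1 then qq e (m-1) x else 0)
      - (if k = m then qq e (m+1) (x - ((m:ℕ) : ZMod N)) else 0)
      - (if k = m-2 then qq e (m-1) (x - (((m-2):ℕ) : ZMod N)) else 0) := by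
  have hxi : (x - ((k:ℕ) : ZMod N)) + ((k:ℕ) : ZMod N) = x := by ring
  by_cases hk0 : k = 0
  · subst hk0
    rw [if_neg (by omega), if_neg (by omega), if_neg (by omega), if_neg (by omega)]
    have h0 : x - ((0:ℕ) : ZMod N) = x := by push_cast; ring
    rw [h0, z0 hN e h1 h2 h4 x m (Or.inr ⟨by omega, by omega⟩)]
    simp
  by_cases hk1 : k = 1
  · subst hk1
    rw [if_neg (by omega), if_pos rfl, if_neg (by omega), if_neg (by omega)]
    obtain ⟨t, rfl⟩ : ∃ t, m = t + 4 := ⟨m - 4, by omega⟩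
    have hx1 : (x - ((1:ℕ) : ZMod N)) + 1 = x := by push_cast; ring
    have hu := uLem hN e h1 h2 h3 h4 (x - ((1:ℕ) : ZMod N)) t (by omega)
    rw [hx1] at hu
    rw [hu, show t + 4 - 1 = t + 3 from by omega]
    abel
  by_cases hkm2 : k = m - 2
  · subst hkm2
    rw [if_neg (by omega), if_neg (by omega), if_neg (by omega), if_pos rfl]
    obtain ⟨t, rfl⟩ : ∃ t, m = t + 4 := ⟨m - 4, by omega⟩
    rw [show t + 4 - 2 = t + 2 from by omega] at hxi ⊢
    have hw := wLem hN e h1 h2 h3 h4 (x - (((t+2):ℕ) : ZMod N)) t (by omega)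
    rw [hxi] at hw
    rw [hw, show t + 4 - 1 = t + 3 from by omega]
    abel
  by_cases hkm1 : k = m - 1
  · subst hkm1
    rw [if_neg (by omega), if_neg (by omega), if_neg (by omega), if_neg (by omega)]
    obtain ⟨t, rfl⟩ : ∃ t, m = t + 2 := ⟨m - 2, by omega⟩
    rw [show t + 2 - 1 = t + 1 from by omega] at hxi ⊢
    have h := z1 hN e h1 h3 h4 (x - (((t+1):ℕ) : ZMod N)) t (by omega) (by omega)
    rw [hxi] at h
    rw [h]
    simp
  by_cases hkm : k = m
  · subst hkm
    rw [if_neg (by omega), if_neg (by omega), if_pos rfl, if_neg (by omega)]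
    have h := e2Lem hN e h4 (x - ((k:ℕ) : ZMod N)) k (by omega) hmN
    rw [hxi] at h
    rw [h]
    abel
  by_cases hkN1 : k = N - 1
  · subst hkN1
    rw [if_pos rfl, if_neg (by omega), if_neg (by omega), if_neg (by omega)]
    have hcast : x - (((N-1):ℕ) : ZMod N) = x + 1 := by
      rw [castN1 hN, sub_neg_eq_add]
    rw [hcast, ← qq_succ e m (by omega) x]
    abel
  · rw [if_neg hkN1, if_neg hkm, if_neg hk1, if_neg hkm2]
    have hcase : (2 ≤ k ∧ k + 3 ≤ m) ∨ (m + 1 ≤ k ∧ k ≤ N - 2) := by omega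
    rcases hcase with ⟨hc1, hc2⟩ | ⟨hc1, hc2⟩
    · have h := zint hN e h1 h2 h3 h4 k hc1 m (x - ((k:ℕ) : ZMod N)) hc2 (by omega)
      rw [hxi] at h
      rw [h]; simp
    · have h := cm_far hN e h4 (x - ((k:ℕ) : ZMod N)) m k hc1 hc2
      rw [hxi] at h
      rw [h]; simp

include hNe h1 h2 h3 h4 in
lemma term_plus2 (x : ZMod N) (k : ℕ) (hkN : k < N) :
    cm (e x) (qq e 2 (x - ((k:ℕ) : ZMod N))) =
      (if k = N-1 then qq e 3 x else 0) + (if k = 1 then e x + e x else 0)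
      - (if k = 2 then qq e 3 (x - ((2:ℕ) : ZMod N)) else 0)
      - (if k = 0 then e x + e x else 0) := by
  have hxi : (x - ((k:ℕ) : ZMod N)) + ((k:ℕ) : ZMod N) = x := by ring
  by_cases hk0 : k = 0
  · subst hk0
    rw [if_neg (by omega), if_neg (by omega), if_neg (by omega), if_pos rfl]
    have h0 : x - ((0:ℕ) : ZMod N) = x := by push_cast; ring
    rw [h0]
    have e1 : e x * (e x * e (x+1)) = 0 := by rw [← mul_assoc, h1 x, zero_mul]
    have e2 : e x * (e (x+1) * e x) = e x := by rw [← mul_assoc, h2 x]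
    have e3 : (e x * e (x+1)) * e x = e x := h2 x
    have e4 : (e (x+1) * e x) * e x = 0 := by rw [mul_assoc, h1 x, mul_zero]
    calc cm (e x) (qq e 2 x)
        = e x*(e x*e (x+1)) - e x*(e (x+1)*e x)
          - ((e x*e (x+1))*e x - (e (x+1)*e x)*e x) := by
          show cm (e x) (cm (e x) (qq e 1 (x+1))) = _
          rw [qq, cm, cm, mul_sub, sub_mul]
      _ = _ := by rw [e1, e2, e3, e4]; abel
  by_cases hk1 : k = 1
  · subst hk1
    rw [if_neg (by omega), if_pos rfl, if_neg (by omega), if_neg (by omega)]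
    have hx1 : (x - ((1:ℕ) : ZMod N)) + 1 = x := by push_cast; ring
    set i := x - ((1:ℕ) : ZMod N) with hi
    have h3x : e x * e i * e x = e x := by have := h3 i; rwa [hx1] at this
    have hqq : qq e 2 i = cm (e i) (e x) := by
      show cm (e i) (qq e 1 (i+1)) = _
      rw [qq, hx1]
    have e1 : e x * (e i * e x) = e x := by rw [← mul_assoc, h3x]
    have e2 : e x * (e x * e i) = 0 := by rw [← mul_assoc, h1 x, zero_mul]
    have e3 : (e i * e x) * e x = 0 := by rw [mul_assoc, h1 x, mul_zero]
    have e4 : (e x * e i) * e x = e x := h3x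
    calc cm (e x) (qq e 2 i)
        = e x*(e i*e x) - e x*(e x*e i) - ((e i*e x)*e x - (e x*e i)*e x) := by
          rw [hqq, cm, cm, mul_sub, sub_mul]
      _ = _ := by rw [e1, e2, e3, e4]; abel
  by_cases hk2 : k = 2
  · subst hk2
    rw [if_neg (by omega), if_neg (by omega), if_pos rfl, if_neg (by omega)]
    have h := e2Lem hN e h4 (x - ((2:ℕ) : ZMod N)) 2 (by omega) (by omega)
    rw [hxi] at h
    rw [h]
    abel
  by_cases hkN1 : k = N - 1
  · subst hkN1
    rw [if_pos rfl, if_neg (by omega), if_neg (by omega), if_neg (by omega)]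
    have hcast : x - (((N-1):ℕ) : ZMod N) = x + 1 := by
      rw [castN1 hN, sub_neg_eq_add]
    rw [hcast, ← qq_succ e 2 (by omega) x]
    abel
  · rw [if_neg hkN1, if_neg hk2, if_neg hk1, if_neg hk0]
    have h := cm_far hN e h4 (x - ((k:ℕ) : ZMod N)) 2 k (by omega) (by omega)
    rw [hxi] at h
    rw [h]; simp

include hNe h1 h2 h3 h4 in
lemma Tsum (x : ZMod N) (m : ℕ) (hm2 : 2 ≤ m) (hme : m % 2 = 0) (hmN : m ≤ N - 2) :
    ∑ y : ZMod N, cm (e x) (qq e m y)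
      = (qq e (m+1) x - qq e (m+1) (x - ((m:ℕ) : ZMod N)))
        + (qq e (m-1) x - qq e (m-1) (x - (((m-2):ℕ) : ZMod N))) := by
  rw [sum_univ_sub hN x (fun y => cm (e x) (qq e m y))]
  rcases Nat.lt_or_ge m 4 with hm | hm
  · -- m = 2
    have hm2' : m = 2 := by omega
    subst hm2'
    rw [Finset.sum_congr rfl
      (fun k hk => term_plus2 hN hNe e h1 h2 h3 h4 x k (Finset.mem_range.mp hk))]
    rw [Finset.sum_sub_distrib, Finset.sum_sub_distrib, Finset.sum_add_distrib]
    rw [sum_indicator hN (N-1) _ (by omega), sum_indicator hN 1 _ (by omega),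
      sum_indicator hN 2 _ (by omega), sum_indicator hN 0 _ (by omega)]
    have h0 : x - (((2-2):ℕ) : ZMod N) = x := by push_cast; ring
    rw [h0]
    show qq e 3 x + (e x + e x) - qq e 3 (x - ((2:ℕ) : ZMod N)) - (e x + e x)
      = (qq e 3 x - qq e 3 (x - ((2:ℕ) : ZMod N))) + (qq e 1 x - qq e 1 x)
    abel
  · rw [Finset.sum_congr rfl
      (fun k hk => term_plus hN hNe e h1 h2 h3 h4 x m k hm hmN (Finset.mem_range.mp hk))]
    rw [Finset.sum_sub_distrib, Finset.sum_sub_distrib, Finset.sum_add_distrib]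
    rw [sum_indicator hN (N-1) _ (by omega), sum_indicator hN 1 _ (by omega),
      sum_indicator hN m _ (by omega), sum_indicator hN (m-2) _ (by omega)]
    abel

include hNe h1 h2 h3 h4 in
lemma part2 (b : ZMod 2) (m : ℕ) (hm2 : 2 ≤ m) (hme : m % 2 = 0) (hmN : m ≤ N - 2) :
    cm (∑ x : ZMod N, if pr hNe x = b then qq e 1 x else 0) (∑ y : ZMod N, qq e m y) = 0 := by
  rw [cm_sum_sum]
  have hx : ∀ x : ZMod N, ∑ y : ZMod N, cm (if pr hNe x = b then qq e 1 x else 0) (qq e m y)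
      = ((if pr hNe x = b then qq e (m+1) x else 0)
          - (if pr hNe x = b then qq e (m+1) (x - ((m:ℕ) : ZMod N)) else 0))
        + ((if pr hNe x = b then qq e (m-1) x else 0)
          - (if pr hNe x = b then qq e (m-1) (x - (((m-2):ℕ) : ZMod N)) else 0)) := by
    intro x
    by_cases h : pr hNe x = b
    · simp only [if_pos h]
      show ∑ y : ZMod N, cm (e x) (qq e m y) = _
      rw [Tsum hN hNe e h1 h2 h3 h4 x m hm2 hme hmN]
    · simp only [if_neg h, cm_zero_left, Finset.sum_const_zero, sub_zero, add_zero]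
  rw [Finset.sum_congr rfl (fun x _ => hx x), Finset.sum_add_distrib,
    Finset.sum_sub_distrib, Finset.sum_sub_distrib]
  have hshift : ∀ (r c : ℕ), c % 2 = 0 →
      (∑ x : ZMod N, if pr hNe x = b then qq e r (x - ((c:ℕ) : ZMod N)) else 0)
        = ∑ x : ZMod N, if pr hNe x = b then qq e r x else 0 := by
    intro r c hc
    rw [sum_univ_shift (fun x => if pr hNe x = b then qq e r (x - ((c:ℕ) : ZMod N)) else 0)
      ((c:ℕ) : ZMod N)]
    apply Finset.sum_congr rfl
    intro x _
    have hxc : (x + ((c:ℕ) : ZMod N)) - ((c:ℕ) : ZMod N) = x := by ring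
    have hpc : pr hNe (x + ((c:ℕ) : ZMod N)) = pr hNe x := by
      rw [map_add, pr_natCast hNe, (cast2_eq_zero_iff c).mpr hc, add_zero]
    rw [hxc, hpc]
  rw [hshift (m+1) m hme, hshift (m-1) (m-2) (by omega)]
  abel

include hNe h1 h2 h3 h4 in
lemma part3 (b : ZMod 2) (m : ℕ) (hme : m % 2 = 1) (hmN : m ≤ N - 2) :
    cm (∑ x : ZMod N, if pr hNe x = b then qq e 1 x else 0)
      (∑ y : ZMod N, if pr hNe y = b then qq e m y else 0) = 0 := by
  rw [cm_sum_sum]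
  apply Finset.sum_eq_zero
  intro x _
  apply Finset.sum_eq_zero
  intro y _
  by_cases hx : pr hNe x = b
  · by_cases hy : pr hNe y = b
    · rw [if_pos hx, if_pos hy]
      have hkcast : (((x - y).val : ℕ) : ZMod N) = x - y := ZMod.natCast_rightInverse (x - y)
      have hy' : y = x - (((x - y).val : ℕ) : ZMod N) := by rw [hkcast]; ring
      have hpar : (x - y).val % 2 = 0 := by
        have hp : pr hNe (x - y) = 0 := by rw [map_sub, hx, hy, sub_self]
        rw [← hkcast, pr_natCast hNe, cast2_eq_zero_iff] at hp
        exact hp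
      have := term_ev hN hNe e h1 h2 h3 h4 x m ((x - y).val) hme hmN hpar (ZMod.val_lt _)
      rw [hy']
      exact this
    · rw [if_neg hy, cm_zero_right]
  · rw [if_neg hx, cm_zero_left]

include hNe h1 h2 h3 h4 in
lemma part1 :
    cm (∑ x : ZMod N, if pr hNe x = 0 then qq e 1 x else 0)
      (∑ y : ZMod N, if pr hNe y = 1 then qq e 1 y else 0)
      = (∑ x : ZMod N, if pr hNe x = 0 then qq e 2 x else 0)
        - ∑ x : ZMod N, if pr hNe x = 1 then qq e 2 x else 0 := by
  have hNN : N % 2 = 0 := Nat.even_iff.mp hNe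
  have hneg1 : ∀ a : ZMod 2, (-a = 1 ↔ a = 1) := by decide
  have hadd1 : ∀ a : ZMod 2, (a + 1 = 0 ↔ a = 1) := by decide
  rw [cm_sum_sum]
  have hterm : ∀ x : ZMod N, pr hNe x = 0 → ∀ k : ℕ, k < N →
      (if pr hNe (x - ((k:ℕ) : ZMod N)) = 1 then cm (e x) (e (x - ((k:ℕ) : ZMod N))) else 0)
        = (if k = N-1 then qq e 2 x else 0)
          - (if k = 1 then qq e 2 (x - ((1:ℕ) : ZMod N)) else 0) := by
    intro x hx k hkN
    have hxi : (x - ((k:ℕ) : ZMod N)) + ((k:ℕ) : ZMod N) = x := by ring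
    have hpar : pr hNe (x - ((k:ℕ) : ZMod N)) = 1 ↔ k % 2 = 1 := by
      rw [map_sub, hx, pr_natCast hNe, zero_sub, hneg1, cast2_eq_one_iff]
    by_cases hk1 : k = 1
    · subst hk1
      rw [if_pos (hpar.mpr (by omega)), if_neg (by omega), if_pos rfl]
      have hx1 : (x - ((1:ℕ) : ZMod N)) + 1 = x := by push_cast; ring
      have hqq : qq e 2 (x - ((1:ℕ) : ZMod N)) = cm (e (x - ((1:ℕ) : ZMod N))) (e x) := by
        show cm (e (x - ((1:ℕ) : ZMod N))) (qq e 1 ((x - ((1:ℕ) : ZMod N))+1)) = _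
        rw [qq, hx1]
      rw [hqq, zero_sub, cm_skew]
    by_cases hkN1 : k = N - 1
    · subst hkN1
      rw [if_pos (hpar.mpr (by omega)), if_pos rfl, if_neg (by omega)]
      have hcast : x - (((N-1):ℕ) : ZMod N) = x + 1 := by
        rw [castN1 hN, sub_neg_eq_add]
      rw [hcast, sub_zero]
      rfl
    by_cases hodd : k % 2 = 1
    · rw [if_pos (hpar.mpr hodd), if_neg hkN1, if_neg hk1]
      have h := cm_far hN e h4 (x - ((k:ℕ) : ZMod N)) 1 k (by omega) (by omega)
      rw [hxi] at h
      have h' : cm (e x) (e (x - ((k:ℕ) : ZMod N))) = 0 := h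
      rw [h', sub_zero]
    · rw [if_neg (fun hc => hodd (hpar.mp hc)), if_neg hkN1, if_neg hk1, sub_zero]
  have hcc : ∀ x y : ZMod N,
      cm (if pr hNe x = 0 then qq e 1 x else 0) (if pr hNe y = 1 then qq e 1 y else 0)
        = if pr hNe x = 0 then (if pr hNe y = 1 then cm (e x) (e y) else 0) else 0 := by
    intro x y
    by_cases hx : pr hNe x = 0
    · by_cases hy : pr hNe y = 1
      · rw [if_pos hx, if_pos hy, if_pos hx, if_pos hy]; rfl
      · rw [if_pos hx, if_neg hy, if_pos hx, if_neg hy, cm_zero_right]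
    · rw [if_neg hx, if_neg hx, cm_zero_left]
  rw [Finset.sum_congr rfl (fun x _ => Finset.sum_congr rfl (fun y _ => hcc x y))]
  have hinner : ∀ x : ZMod N,
      (∑ y : ZMod N, if pr hNe x = 0 then (if pr hNe y = 1 then cm (e x) (e y) else 0) else 0)
        = if pr hNe x = 0 then (qq e 2 x - qq e 2 (x - ((1:ℕ) : ZMod N))) else 0 := by
    intro x
    by_cases hx : pr hNe x = 0
    · simp only [if_pos hx]
      rw [sum_univ_sub hN x (fun y => if pr hNe y = 1 then cm (e x) (e y) else 0)]
      rw [Finset.sum_congr rfl (fun k hk => hterm x hx k (Finset.mem_range.mp hk))]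
      rw [Finset.sum_sub_distrib, sum_indicator hN (N-1) _ (by omega),
        sum_indicator hN 1 _ (by omega)]
    · simp only [if_neg hx, Finset.sum_const_zero]
  rw [Finset.sum_congr rfl (fun x _ => hinner x)]
  have hsplit : ∀ x : ZMod N,
      (if pr hNe x = 0 then (qq e 2 x - qq e 2 (x - ((1:ℕ) : ZMod N))) else 0)
        = (if pr hNe x = 0 then qq e 2 x else 0)
          - (if pr hNe x = 0 then qq e 2 (x - ((1:ℕ) : ZMod N)) else 0) := by
    intro x; split_ifs <;> simp
  rw [Finset.sum_congr rfl (fun x _ => hsplit x), Finset.sum_sub_distrib]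
  congr 1
  rw [sum_univ_shift (fun x => if pr hNe x = 0 then qq e 2 (x - ((1:ℕ) : ZMod N)) else 0)
    ((1:ℕ) : ZMod N)]
  apply Finset.sum_congr rfl
  intro x _
  have hxc : (x + ((1:ℕ) : ZMod N)) - ((1:ℕ) : ZMod N) = x := by ring
  have hpc : pr hNe (x + ((1:ℕ) : ZMod N)) = pr hNe x + 1 := by
    rw [map_add, pr_natCast hNe]; norm_num
  rw [hxc, hpc]
  by_cases h : pr hNe x = 1
  · rw [if_pos ((hadd1 _).mpr h), if_pos h]
  · rw [if_neg (fun hc => h ((hadd1 _).mp hc)), if_neg h]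

end Main

end TL7

theorem stmt_7 {A : Type*} [NonUnitalRing A] (N : ℕ) (hN : 4 ≤ N) (hNe : Even N)
    (e : ZMod N → A)
    (h1 : ∀ i : ZMod N, e i * e i = 0)
    (h2 : ∀ i : ZMod N, e i * e (i + 1) * e i = e i)
    (h3 : ∀ i : ZMod N, e (i + 1) * e i * e (i + 1) = e (i + 1))
    (h4 : ∀ i j : ZMod N, j ≠ i - 1 → j ≠ i → j ≠ i + 1 → e i * e j = e j * e i) :
    cm (qev e 1) (qod e 1) = qminus e 2 ∧
    (∀ s : ℕ, 1 ≤ s → 2 * s + 1 ≤ N - 1 →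
      cm (qev e 1) (qplus e (2 * s)) = 0 ∧ cm (qod e 1) (qplus e (2 * s)) = 0) ∧
    (∀ s : ℕ, 2 * s + 2 ≤ N - 1 →
      cm (qev e 1) (qev e (2 * s + 1)) = 0 ∧ cm (qod e 1) (qod e (2 * s + 1)) = 0) := by
  haveI : NeZero N := ⟨by omega⟩
  refine ⟨?_, ?_, ?_⟩
  · rw [TL7.qev_eq hN hNe e 1, TL7.qod_eq hN hNe e 1, TL7.qminus_eq2 hN hNe e]
    exact TL7.part1 hN hNe e h1 h2 h3 h4
  · intro s hs1 hs2
    have hm2 : 2 ≤ 2*s := by omega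
    have hme : (2*s) % 2 = 0 := by omega
    have hmN : 2*s ≤ N - 2 := by omega
    constructor
    · rw [TL7.qev_eq hN hNe e 1, TL7.qplus_eq hN e (2*s)]
      exact TL7.part2 hN hNe e h1 h2 h3 h4 0 (2*s) hm2 hme hmN
    · rw [TL7.qod_eq hN hNe e 1, TL7.qplus_eq hN e (2*s)]
      exact TL7.part2 hN hNe e h1 h2 h3 h4 1 (2*s) hm2 hme hmN
  · intro s hs
    have hme : (2*s+1) % 2 = 1 := by omega
    have hmN : 2*s+1 ≤ N - 2 := by omega
    constructor
    · rw [TL7.qev_eq hN hNe e 1, TL7.qev_eq hN hNe e (2*s+1)]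
      exact TL7.part3 hN hNe e h1 h2 h3 h4 0 (2*s+1) hme hmN
    · rw [TL7.qod_eq hN hNe e 1, TL7.qod_eq hN hNe e (2*s+1)]
      exact TL7.part3 hN hNe e h1 h2 h3 h4 1 (2*s+1) hme hmN
end
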